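/- arXiv:2207.14175 — 4 statements merged into one kernel-verified Lean document; each statement's English description precedes it below -/
import Mathlib

section
/- For the bi-Helmholtz kernel K(x) = (1/(4α²))(α+|x|)e^{-|x|/α} with α > 0, and for all x ≠ 0, the identity K(x)K'''(x) − 2α²K''(x)K'''(x) + (1/2)α⁴((K''')²)'(x) = 0 holds. -/
/-- The bi-Helmholtz kernel `K(x) = (1/(4α²))(α+|x|)e^{-|x|/α}`. -/
noncomputable def biHelmholtzK (α : ℝ) (x : ℝ) : ℝ :=
  (1 / (4 * α ^ 2)) * (α + |x|) * Real.exp (-|x| / α)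

lemma hasDerivAt_G (a b d y : ℝ) :
    HasDerivAt (fun y => (a + b * y) * Real.exp (d * y))
      (((b + d * a) + (d * b) * y) * Real.exp (d * y)) y := by
  have h1 : HasDerivAt (fun y : ℝ => a + b * y) b y := by
    simpa using ((hasDerivAt_id y).const_mul b).const_add a
  have h2 : HasDerivAt (fun y : ℝ => Real.exp (d * y)) (d * Real.exp (d * y)) y := by
    simpa [mul_comm, Function.comp_def] using (Real.hasDerivAt_exp (d * y)).comp y ((hasDerivAt_id y).const_mul d)
  exact (h1.mul h2).congr_deriv (by ring)

lemma deriv_G (a b d : ℝ) :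
    deriv (fun y => (a + b * y) * Real.exp (d * y))
      = fun y => ((b + d * a) + (d * b) * y) * Real.exp (d * y) := by
  funext y
  rw [(hasDerivAt_G a b d y).deriv]

lemma main_aux (α : ℝ) (hα : 0 < α) (ε : ℝ) (hε : ε = 1 ∨ ε = -1) (x : ℝ)
    (s : Set ℝ) (hs : IsOpen s) (hxs : x ∈ s)
    (hK : ∀ y ∈ s, biHelmholtzK α y
      = ((1 / (4 * α ^ 2)) * α + (ε * (1 / (4 * α ^ 2))) * y) * Real.exp ((-ε / α) * y)) :
    biHelmholtzK α x * iteratedDeriv 3 (biHelmholtzK α) x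
      - 2 * α ^ 2 * iteratedDeriv 2 (biHelmholtzK α) x * iteratedDeriv 3 (biHelmholtzK α) x
      + (1 / 2) * α ^ 4 * deriv (fun y => (iteratedDeriv 3 (biHelmholtzK α) y) ^ 2) x = 0 := by
  have hαne : α ≠ 0 := ne_of_gt hα
  set c : ℝ := 1 / (4 * α ^ 2) with hc
  set a : ℝ := c * α with ha
  set b : ℝ := ε * c with hb
  set d : ℝ := -ε / α with hd
  set a1 : ℝ := b + d * a with ha1
  set b1 : ℝ := d * b with hb1
  set a2 : ℝ := b1 + d * a1 with ha2
  set b2 : ℝ := d * b1 with hb2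
  set a3 : ℝ := b2 + d * a2 with ha3
  set b3 : ℝ := d * b2 with hb3
  set a4 : ℝ := b3 + d * a3 with ha4
  set b4 : ℝ := d * b3 with hb4
  have hev : biHelmholtzK α =ᶠ[nhds x] fun y => (a + b * y) * Real.exp (d * y) :=
    Filter.eventuallyEq_of_mem (hs.mem_nhds hxs) hK
  have hevs : ∀ y ∈ s, biHelmholtzK α =ᶠ[nhds y] fun z => (a + b * z) * Real.exp (d * z) :=
    fun y hy => Filter.eventuallyEq_of_mem (hs.mem_nhds hy) hK
  -- explicit iterated derivatives of the smooth model
  have hG2 : iteratedDeriv 2 (fun y => (a + b * y) * Real.exp (d * y))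
      = fun y => (a2 + b2 * y) * Real.exp (d * y) := by
    rw [show (2 : ℕ) = 0 + 1 + 1 by rfl]
    rw [iteratedDeriv_succ, iteratedDeriv_succ, iteratedDeriv_zero, deriv_G, deriv_G]
  have hG3 : iteratedDeriv 3 (fun y => (a + b * y) * Real.exp (d * y))
      = fun y => (a3 + b3 * y) * Real.exp (d * y) := by
    rw [show (3 : ℕ) = 2 + 1 by rfl, iteratedDeriv_succ, hG2, deriv_G]
  have h2 : iteratedDeriv 2 (biHelmholtzK α) x = (a2 + b2 * x) * Real.exp (d * x) := by
    rw [hev.iteratedDeriv_eq 2, hG2]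
  have h3fun : ∀ y ∈ s, iteratedDeriv 3 (biHelmholtzK α) y
      = (a3 + b3 * y) * Real.exp (d * y) := by
    intro y hy
    rw [(hevs y hy).iteratedDeriv_eq 3, hG3]
  have h3 := h3fun x hxs
  have h0 : biHelmholtzK α x = (a + b * x) * Real.exp (d * x) := hK x hxs
  -- derivative of the square
  have hevsq : (fun y => (iteratedDeriv 3 (biHelmholtzK α) y) ^ 2)
      =ᶠ[nhds x] fun y => ((a3 + b3 * y) * Real.exp (d * y)) ^ 2 := by
    refine Filter.eventuallyEq_of_mem (hs.mem_nhds hxs) ?_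
    intro y hy
    simp only [h3fun y hy]
  have hsq : HasDerivAt (fun y => ((a3 + b3 * y) * Real.exp (d * y)) ^ 2)
      (2 * ((a3 + b3 * x) * Real.exp (d * x)) ^ 1 * ((a4 + b4 * x) * Real.exp (d * x)))
      x := (hasDerivAt_G a3 b3 d x).pow 2
  have hderiv : deriv (fun y => (iteratedDeriv 3 (biHelmholtzK α) y) ^ 2) x
      = 2 * ((a3 + b3 * x) * Real.exp (d * x)) * ((a4 + b4 * x) * Real.exp (d * x)) := by
    rw [hevsq.deriv_eq]
    simpa using hsq.deriv
  rw [h0, h2, h3, hderiv]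
  simp only [ha4, hb4, ha3, hb3, ha2, hb2, ha1, hb1, ha, hb, hd, hc]
  rcases hε with rfl | rfl <;> field_simp <;> ring

/-- For `x ≠ 0`, `K(x)K'''(x) − 2α²K''(x)K'''(x) + (1/2)α⁴((K''')²)'(x) = 0`. -/
theorem stmt0 (α : ℝ) (hα : 0 < α) (x : ℝ) (hx : x ≠ 0) :
    biHelmholtzK α x * iteratedDeriv 3 (biHelmholtzK α) x
      - 2 * α ^ 2 * iteratedDeriv 2 (biHelmholtzK α) x * iteratedDeriv 3 (biHelmholtzK α) x
      + (1 / 2) * α ^ 4 * deriv (fun y => (iteratedDeriv 3 (biHelmholtzK α) y) ^ 2) x = 0 := by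
  rcases lt_or_gt_of_ne hx with hneg | hpos
  · refine main_aux α hα (-1) (Or.inr rfl) x (Set.Iio 0) isOpen_Iio hneg ?_
    intro y hy
    have hy' : y < 0 := hy
    rw [biHelmholtzK, abs_of_neg hy']
    ring_nf
  · refine main_aux α hα 1 (Or.inl rfl) x (Set.Ioi 0) isOpen_Ioi hpos ?_
    intro y hy
    have hy' : 0 < y := hy
    rw [biHelmholtzK, abs_of_pos hy']
    ring_nf
end

section
/- Particle no-crossing theorem: let w₁,...,w_N ≥ 0 with Σwᵢ ≤ 1, let D = {x ∈ ℝᴺ : x₁ < ⋯ < x_N}, and let v : D → ℝᴺ be the bounded Lipschitz velocity field vᵢ(x) = (Σⱼ wⱼK(xᵢ−xⱼ))² · Σ_{j≠i} wⱼK'''(xᵢ−xⱼ). Then the initial value problem ẋ = v(x), x(0) = x⁰ ∈ D admits a unique solution x : [0,∞) → D defined for all t ≥ 0; i.e. the ordering x₁(t) < ⋯ < x_N(t) persists for all time. -/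
open Finset

/-- The particle velocity field
`vᵢ(x) = (Σⱼ wⱼ K(xᵢ−xⱼ))² · Σ_{j≠i} wⱼ K'''(xᵢ−xⱼ)`. -/
noncomputable def particleVelocity (α : ℝ) (N : ℕ) (w : Fin N → ℝ)
    (x : Fin N → ℝ) (i : Fin N) : ℝ :=
  (∑ j, w j * biHelmholtzK α (x i - x j)) ^ 2 *
    ∑ j ∈ univ.filter (fun j => j ≠ i), w j * iteratedDeriv 3 (biHelmholtzK α) (x i - x j)

noncomputable def G3 (α : ℝ) (u : ℝ) : ℝ :=
  (1 / (4 * α ^ 4)) * (2 - |u| / α) * Real.exp (-|u| / α)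

section kernel
variable {α : ℝ} (hα : 0 < α)

lemma expAux (v : ℝ) : HasDerivAt (fun v : ℝ => Real.exp (-v / α)) (-(1/α) * Real.exp (-v / α)) v := by
  have h : HasDerivAt (fun v : ℝ => -v / α) (-(1/α)) v := by
    simpa [neg_div] using ((hasDerivAt_id v).div_const α).fun_neg
  simpa [mul_comm] using h.exp

include hα

lemma d1 (v : ℝ) : HasDerivAt (fun v : ℝ => 1/(4*α^2) * (α + v) * Real.exp (-v / α))
    (-(1/(4*α^3)) * v * Real.exp (-v / α)) v := by
  have h1 : HasDerivAt (fun v : ℝ => 1/(4*α^2) * (α + v)) (1/(4*α^2)) v := by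
    have := ((hasDerivAt_id v).const_add α).const_mul (1/(4*α^2))
    rwa [mul_one] at this
  have := h1.fun_mul (expAux (α := α) v)
  refine this.congr_deriv ?_
  have h0 : α ≠ 0 := ne_of_gt hα
  field_simp
  ring

lemma d2 (v : ℝ) : HasDerivAt (fun v : ℝ => -(1/(4*α^3)) * v * Real.exp (-v / α))
    (-(1/(4*α^3)) * (1 - v/α) * Real.exp (-v / α)) v := by
  have h1 : HasDerivAt (fun v : ℝ => -(1/(4*α^3)) * v) (-(1/(4*α^3))) v := by
    have := (hasDerivAt_id v).const_mul (-(1/(4*α^3)))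
    rwa [mul_one] at this
  have := h1.fun_mul (expAux (α := α) v)
  refine this.congr_deriv ?_
  have h0 : α ≠ 0 := ne_of_gt hα
  field_simp
  ring

lemma d3 (v : ℝ) : HasDerivAt (fun v : ℝ => -(1/(4*α^3)) * (1 - v/α) * Real.exp (-v / α))
    ((1/(4*α^4)) * (2 - v/α) * Real.exp (-v / α)) v := by
  have h1 : HasDerivAt (fun v : ℝ => -(1/(4*α^3)) * (1 - v/α)) (1/(4*α^4)) v := by
    have : HasDerivAt (fun v : ℝ => 1 - v/α) (-(1/α)) v := by
      simpa [neg_div, sub_eq_add_neg] using (((hasDerivAt_id v).div_const α).fun_neg.const_add 1)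
    have := this.const_mul (-(1/(4*α^3)))
    refine this.congr_deriv ?_
    have h0 : α ≠ 0 := ne_of_gt hα
    field_simp
  have := h1.fun_mul (expAux (α := α) v)
  refine this.congr_deriv ?_
  have h0 : α ≠ 0 := ne_of_gt hα
  field_simp
  ring

lemma iter3_pos {u : ℝ} (hu : 0 < u) :
    iteratedDeriv 3 (biHelmholtzK α) u = G3 α u := by
  have hev : biHelmholtzK α =ᶠ[nhds u] (fun v : ℝ => 1/(4*α^2) * (α + v) * Real.exp (-v / α)) := by
    filter_upwards [Ioi_mem_nhds hu] with v hv
    have : |v| = v := abs_of_pos hv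
    simp [biHelmholtzK, this]
  have e1 : deriv (fun v : ℝ => 1/(4*α^2) * (α + v) * Real.exp (-v / α))
      = (fun v : ℝ => -(1/(4*α^3)) * v * Real.exp (-v / α)) :=
    funext fun v => (d1 hα v).deriv
  have e2 : deriv (fun v : ℝ => -(1/(4*α^3)) * v * Real.exp (-v / α))
      = (fun v : ℝ => -(1/(4*α^3)) * (1 - v/α) * Real.exp (-v / α)) :=
    funext fun v => (d2 hα v).deriv
  have e3 : deriv (fun v : ℝ => -(1/(4*α^3)) * (1 - v/α) * Real.exp (-v / α))
      = (fun v : ℝ => (1/(4*α^4)) * (2 - v/α) * Real.exp (-v / α)) :=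
    funext fun v => (d3 hα v).deriv
  have : iteratedDeriv 3 (biHelmholtzK α) u
      = deriv (deriv (deriv (biHelmholtzK α))) u := by
    simp [iteratedDeriv_succ, iteratedDeriv_zero]
  rw [this, (hev.deriv.deriv.deriv).eq_of_nhds, e1, e2, e3, G3, abs_of_pos hu]

omit hα in
lemma deriv_neg_of_even {f : ℝ → ℝ} (hf : ∀ x, f (-x) = f x) (x : ℝ) :
    deriv f (-x) = -deriv f x := by
  have h := deriv_comp_neg (f := f) (x := x)
  have : (fun x : ℝ => f (-x)) = f := funext hf
  rw [this] at h
  linarith [h]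

omit hα in
lemma deriv_neg_of_odd {f : ℝ → ℝ} (hf : ∀ x, f (-x) = -f x) (x : ℝ) :
    deriv f (-x) = deriv f x := by
  have h := deriv_comp_neg (f := f) (x := x)
  have : (fun x : ℝ => f (-x)) = fun x => -f x := funext hf
  rw [this, deriv.fun_neg] at h
  linarith [h]

lemma iter3_neg {u : ℝ} (hu : u < 0) :
    iteratedDeriv 3 (biHelmholtzK α) u = -G3 α u := by
  have hKeven : ∀ x : ℝ, biHelmholtzK α (-x) = biHelmholtzK α x := by
    intro x; simp [biHelmholtzK]
  have h1 : ∀ x : ℝ, deriv (biHelmholtzK α) (-x) = -deriv (biHelmholtzK α) x :=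
    deriv_neg_of_even hKeven
  have h2 : ∀ x : ℝ, deriv (deriv (biHelmholtzK α)) (-x) = deriv (deriv (biHelmholtzK α)) x :=
    deriv_neg_of_odd h1
  have h3 : ∀ x : ℝ, deriv (deriv (deriv (biHelmholtzK α))) (-x)
      = -deriv (deriv (deriv (biHelmholtzK α))) x :=
    deriv_neg_of_even h2
  have hit : ∀ v : ℝ, iteratedDeriv 3 (biHelmholtzK α) v
      = deriv (deriv (deriv (biHelmholtzK α))) v := by
    intro v; simp [iteratedDeriv_succ, iteratedDeriv_zero]
  have hpos := iter3_pos hα (neg_pos.2 hu)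
  rw [hit] at hpos ⊢
  have := h3 (-u)
  rw [neg_neg] at this
  rw [this, hpos]
  have : G3 α (-u) = G3 α u := by simp [G3]
  rw [this]

end kernel

lemma se_le (s : ℝ) (hs : 0 ≤ s) : s * Real.exp (-s) ≤ 1 := by
  rw [Real.exp_neg]
  rw [mul_inv_le_iff₀ (Real.exp_pos s), one_mul]
  calc s ≤ s + 1 := by linarith
  _ ≤ Real.exp s := by simpa using Real.add_one_le_exp s

lemma cse_le {c : ℝ} (hc : 1 ≤ c) (s : ℝ) (hs : 0 ≤ s) : |(c - s) * Real.exp (-s)| ≤ c := by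
  rcases le_total s c with h | h
  · have h0 : (0:ℝ) ≤ (c - s) * Real.exp (-s) :=
      mul_nonneg (by linarith) (Real.exp_pos _).le
    rw [abs_of_nonneg h0]
    calc (c - s) * Real.exp (-s) ≤ (c - s) * 1 := by
          apply mul_le_mul_of_nonneg_left (Real.exp_le_one_iff.2 (by linarith)) (by linarith)
    _ ≤ c := by linarith
  · have h0 : (c - s) * Real.exp (-s) ≤ 0 :=
      mul_nonpos_of_nonpos_of_nonneg (by linarith) (Real.exp_pos _).le
    rw [abs_of_nonpos h0]
    have h1 : -((c - s) * Real.exp (-s)) = (s - c) * Real.exp (-s) := by ring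
    rw [h1]
    calc (s - c) * Real.exp (-s) ≤ s * Real.exp (-s) := by
          apply mul_le_mul_of_nonneg_right (by linarith) (Real.exp_pos _).le
    _ ≤ 1 := se_le s hs
    _ ≤ c := hc

section bnds
variable {α : ℝ} (hα : 0 < α)
include hα

lemma K_nonneg (u : ℝ) : 0 ≤ biHelmholtzK α u := by
  unfold biHelmholtzK
  have : (0:ℝ) ≤ α + |u| := by positivity
  positivity

omit hα in
lemma expform (u : ℝ) : Real.exp (-|u| / α) = Real.exp (-(|u|/α)) := by rw [neg_div]

lemma K_le (u : ℝ) : biHelmholtzK α u ≤ 1 / (2 * α) := by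
  unfold biHelmholtzK
  have h1 : Real.exp (-|u| / α) ≤ 1 := Real.exp_le_one_iff.2 (by
    apply div_nonpos_of_nonpos_of_nonneg (neg_nonpos.2 (abs_nonneg u)) hα.le)
  have h2 : |u| * Real.exp (-|u| / α) ≤ α := by
    have := se_le (|u|/α) (by positivity)
    have heq : |u| * Real.exp (-|u| / α) = α * ((|u|/α) * Real.exp (-(|u|/α))) := by
      rw [neg_div]; field_simp
    rw [heq]
    calc α * ((|u|/α) * Real.exp (-(|u|/α))) ≤ α * 1 :=
          mul_le_mul_of_nonneg_left this hα.le
    _ = α := mul_one α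
  have : (α + |u|) * Real.exp (-|u| / α) ≤ 2 * α := by
    rw [add_mul]
    have : α * Real.exp (-|u| / α) ≤ α := by
      calc α * Real.exp (-|u| / α) ≤ α * 1 := mul_le_mul_of_nonneg_left h1 hα.le
      _ = α := mul_one α
    linarith
  calc 1 / (4 * α ^ 2) * (α + |u|) * Real.exp (-|u| / α)
      = 1 / (4 * α ^ 2) * ((α + |u|) * Real.exp (-|u| / α)) := by ring
  _ ≤ 1 / (4 * α ^ 2) * (2 * α) := by
      apply mul_le_mul_of_nonneg_left this (by positivity)
  _ = 1 / (2 * α) := by field_simp; ring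

lemma K_abs_le (u : ℝ) : |biHelmholtzK α u| ≤ 1 / (2 * α) := by
  rw [abs_of_nonneg (K_nonneg hα u)]; exact K_le hα u

lemma G3_abs_le (u : ℝ) : |G3 α u| ≤ 1 / (2 * α ^ 4) := by
  unfold G3
  have hs : (0:ℝ) ≤ |u| / α := by positivity
  have := cse_le (by norm_num : (1:ℝ) ≤ 2) (|u|/α) hs
  have heq : 1 / (4 * α ^ 4) * (2 - |u| / α) * Real.exp (-|u| / α)
      = 1 / (4 * α ^ 4) * ((2 - |u|/α) * Real.exp (-(|u|/α))) := by rw [neg_div]; ring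
  rw [heq, abs_mul]
  have h4 : |1 / (4 * α ^ 4)| = 1 / (4 * α^4) := abs_of_pos (by positivity)
  rw [h4]
  calc 1 / (4 * α ^ 4) * |(2 - |u|/α) * Real.exp (-(|u|/α))| ≤ 1 / (4 * α ^ 4) * 2 :=
        mul_le_mul_of_nonneg_left this (by positivity)
  _ = 1 / (2 * α ^ 4) := by field_simp; ring

lemma G3_zero_nonneg : 0 ≤ G3 α 0 := by
  unfold G3; simp; positivity

end bnds

section kernel2
variable {α : ℝ} (hα : 0 < α)
include hα
lemma d3aux (v : ℝ) : HasDerivAt (fun v : ℝ => 1/(4*α^4) * (2 - v/α) * Real.exp (-v / α))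
    (-(1/(4*α^5)) * (3 - v/α) * Real.exp (-v / α)) v := by
  have h1 : HasDerivAt (fun v : ℝ => 1/(4*α^4) * (2 - v/α)) (-(1/(4*α^5))) v := by
    have h : HasDerivAt (fun v : ℝ => 2 - v/α) (-(1/α)) v := by
      simpa [neg_div, sub_eq_add_neg] using (((hasDerivAt_id v).div_const α).fun_neg.const_add 2)
    have := h.const_mul (1/(4*α^4))
    refine this.congr_deriv ?_
    have h0 : α ≠ 0 := ne_of_gt hα
    field_simp
  have hE : HasDerivAt (fun v : ℝ => Real.exp (-v / α)) (-(1/α) * Real.exp (-v / α)) v := by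
    have h : HasDerivAt (fun v : ℝ => -v / α) (-(1/α)) v := by
      simpa [neg_div] using ((hasDerivAt_id v).div_const α).fun_neg
    simpa [mul_comm] using h.exp
  have := h1.fun_mul hE
  refine this.congr_deriv ?_
  have h0 : α ≠ 0 := ne_of_gt hα
  field_simp
  ring

lemma K_lip (u v : ℝ) :
    |biHelmholtzK α u - biHelmholtzK α v| ≤ 1/(4*α^2) * |u - v| := by
  have h0 : α ≠ 0 := ne_of_gt hα
  have key : ∀ x ∈ Set.Ici (0:ℝ), ∀ y ∈ Set.Ici (0:ℝ),
      ‖(fun r : ℝ => 1/(4*α^2) * (α + r) * Real.exp (-r / α)) y -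
        (fun r : ℝ => 1/(4*α^2) * (α + r) * Real.exp (-r / α)) x‖ ≤ 1/(4*α^2) * ‖y - x‖ := by
    intro x hx y hy
    apply Convex.norm_image_sub_le_of_norm_hasDerivWithin_le
      (f' := fun r : ℝ => -(1/(4*α^3)) * r * Real.exp (-r / α))
      (fun r _ => (d1 hα r).hasDerivWithinAt) ?_ (convex_Ici 0) hx hy
    intro r hr
    have hr0 : (0:ℝ) ≤ r := hr
    rw [Real.norm_eq_abs, abs_mul, abs_mul, abs_neg,
      abs_of_pos (by positivity : (0:ℝ) < 1/(4*α^3)), abs_of_nonneg hr0,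
      abs_of_pos (Real.exp_pos _)]
    have h2 : r * Real.exp (-r / α) ≤ α := by
      have hse := se_le (r/α) (by positivity)
      have heq : r * Real.exp (-r / α) = α * ((r/α) * Real.exp (-(r/α))) := by
        rw [neg_div]; field_simp
      rw [heq]
      calc α * ((r/α) * Real.exp (-(r/α))) ≤ α * 1 := mul_le_mul_of_nonneg_left hse hα.le
      _ = α := mul_one α
    calc 1/(4*α^3) * r * Real.exp (-r / α) = 1/(4*α^3) * (r * Real.exp (-r / α)) := by ring
    _ ≤ 1/(4*α^3) * α := mul_le_mul_of_nonneg_left h2 (by positivity)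
    _ = 1/(4*α^2) := by field_simp
  have hK : ∀ z : ℝ, biHelmholtzK α z
      = (fun r : ℝ => 1/(4*α^2) * (α + r) * Real.exp (-r / α)) |z| := by
    intro z; simp [biHelmholtzK]
  have h2 := key |v| (abs_nonneg v) |u| (abs_nonneg u)
  rw [Real.norm_eq_abs, Real.norm_eq_abs] at h2
  rw [hK u, hK v]
  refine h2.trans ?_
  apply mul_le_mul_of_nonneg_left _ (by positivity)
  exact abs_abs_sub_abs_le_abs_sub u v

lemma G3_lip (u v : ℝ) :
    |G3 α u - G3 α v| ≤ 3/(4*α^5) * |u - v| := by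
  have h0 : α ≠ 0 := ne_of_gt hα
  have key : ∀ x ∈ Set.Ici (0:ℝ), ∀ y ∈ Set.Ici (0:ℝ),
      ‖(fun r : ℝ => 1/(4*α^4) * (2 - r/α) * Real.exp (-r / α)) y -
        (fun r : ℝ => 1/(4*α^4) * (2 - r/α) * Real.exp (-r / α)) x‖ ≤ 3/(4*α^5) * ‖y - x‖ := by
    intro x hx y hy
    apply Convex.norm_image_sub_le_of_norm_hasDerivWithin_le
      (f' := fun r : ℝ => -(1/(4*α^5)) * (3 - r/α) * Real.exp (-r / α))
      (fun r _ => (d3aux hα r).hasDerivWithinAt) ?_ (convex_Ici 0) hx hy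
    intro r hr
    have hr0 : (0:ℝ) ≤ r := hr
    have hcse := cse_le (by norm_num : (1:ℝ) ≤ 3) (r/α) (by positivity)
    have heq : ‖-(1/(4*α^5)) * (3 - r/α) * Real.exp (-r / α)‖
        = 1/(4*α^5) * |(3 - r/α) * Real.exp (-(r/α))| := by
      rw [Real.norm_eq_abs, neg_div, mul_assoc, abs_mul, abs_neg,
        abs_of_pos (by positivity : (0:ℝ) < 1/(4*α^5))]
    rw [heq]
    calc 1/(4*α^5) * |(3 - r/α) * Real.exp (-(r/α))| ≤ 1/(4*α^5) * 3 :=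
          mul_le_mul_of_nonneg_left hcse (by positivity)
    _ = 3/(4*α^5) := by ring
  have hG : ∀ z : ℝ, G3 α z
      = (fun r : ℝ => 1/(4*α^4) * (2 - r/α) * Real.exp (-r / α)) |z| := by
    intro z; simp [G3]
  have h2 := key |v| (abs_nonneg v) |u| (abs_nonneg u)
  rw [Real.norm_eq_abs, Real.norm_eq_abs] at h2
  rw [hG u, hG v]
  refine h2.trans ?_
  apply mul_le_mul_of_nonneg_left _ (by positivity)
  exact abs_abs_sub_abs_le_abs_sub u v
end kernel2

/-- The extended (globally Lipschitz) velocity field. -/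
noncomputable def Fv (α : ℝ) (N : ℕ) (w : Fin N → ℝ) (x : Fin N → ℝ) (i : Fin N) : ℝ :=
  (∑ j, w j * biHelmholtzK α (x i - x j)) ^ 2 *
    ∑ j ∈ univ.filter (fun j => j ≠ i),
      w j * (if j < i then G3 α (x i - x j) else -(G3 α (x i - x j)))

/-- bound constant -/
noncomputable def Cb (α : ℝ) : ℝ := (1/(2*α))^2 * (1/(2*α^4))
/-- Lipschitz constant -/
noncomputable def CL (α : ℝ) : ℝ :=
  (1/(2*α))^2 * (2*(3/(4*α^5))) + (1/(2*α^4)) * (2*(1/(2*α))) * (2*(1/(4*α^2)))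

section veloc
variable {α : ℝ} (hα : 0 < α) {N : ℕ} {w : Fin N → ℝ}
  (hw : ∀ j, 0 ≤ w j) (hw1 : ∑ j, w j ≤ 1)
include hα

/-- On the ordered cone the two velocity fields agree. -/
lemma Fv_eq_particleVelocity {x : Fin N → ℝ} (hx : ∀ i j : Fin N, i < j → x i < x j) :
    particleVelocity α N w x = Fv α N w x := by
  funext i
  unfold particleVelocity Fv
  congr 1
  apply Finset.sum_congr rfl
  intro j hj
  have hji : j ≠ i := (Finset.mem_filter.1 hj).2
  rcases hji.lt_or_gt with h | h
  · rw [if_pos h, iter3_pos hα (by have := hx j i h; linarith)]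
  · rw [if_neg (asymm h), iter3_neg hα (by have := hx i j h; linarith)]

include hw hw1

lemma sumP_abs_le (x : Fin N → ℝ) (i : Fin N) :
    |∑ j, w j * biHelmholtzK α (x i - x j)| ≤ 1/(2*α) := by
  calc |∑ j, w j * biHelmholtzK α (x i - x j)|
      ≤ ∑ j, |w j * biHelmholtzK α (x i - x j)| := Finset.abs_sum_le_sum_abs _ _
  _ ≤ ∑ j, w j * (1/(2*α)) := by
      apply Finset.sum_le_sum
      intro j _
      rw [abs_mul, abs_of_nonneg (hw j)]
      exact mul_le_mul_of_nonneg_left (K_abs_le hα _) (hw j)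
  _ = (∑ j, w j) * (1/(2*α)) := by rw [Finset.sum_mul]
  _ ≤ 1 * (1/(2*α)) := mul_le_mul_of_nonneg_right hw1 (by positivity)
  _ = 1/(2*α) := one_mul _

lemma sumQ_abs_le (x : Fin N → ℝ) (i : Fin N) :
    |∑ j ∈ univ.filter (fun j => j ≠ i),
        w j * (if j < i then G3 α (x i - x j) else -(G3 α (x i - x j)))| ≤ 1/(2*α^4) := by
  calc |∑ j ∈ univ.filter (fun j => j ≠ i),
        w j * (if j < i then G3 α (x i - x j) else -(G3 α (x i - x j)))|
      ≤ ∑ j ∈ univ.filter (fun j => j ≠ i),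
          |w j * (if j < i then G3 α (x i - x j) else -(G3 α (x i - x j)))| :=
        Finset.abs_sum_le_sum_abs _ _
  _ ≤ ∑ j ∈ univ.filter (fun j => j ≠ i), w j * (1/(2*α^4)) := by
      apply Finset.sum_le_sum
      intro j _
      rw [abs_mul, abs_of_nonneg (hw j)]
      apply mul_le_mul_of_nonneg_left _ (hw j)
      have habs : |if j < i then G3 α (x i - x j) else -(G3 α (x i - x j))|
          = |G3 α (x i - x j)| := by
        split
        · rfl
        · exact abs_neg _
      rw [habs]
      exact G3_abs_le hα _
  _ = (∑ j ∈ univ.filter (fun j => j ≠ i), w j) * (1/(2*α^4)) := by rw [Finset.sum_mul]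
  _ ≤ 1 * (1/(2*α^4)) := by
      apply mul_le_mul_of_nonneg_right _ (by positivity)
      calc ∑ j ∈ univ.filter (fun j => j ≠ i), w j ≤ ∑ j, w j :=
            Finset.sum_le_sum_of_subset_of_nonneg (Finset.filter_subset _ _)
              (fun j _ _ => hw j)
      _ ≤ 1 := hw1
  _ = 1/(2*α^4) := one_mul _

lemma sumP_diff (x y : Fin N → ℝ) (i : Fin N) :
    |(∑ j, w j * biHelmholtzK α (x i - x j)) - ∑ j, w j * biHelmholtzK α (y i - y j)|
      ≤ 2*(1/(4*α^2)) * ‖x - y‖ := by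
  have hnorm : ∀ k : Fin N, |x k - y k| ≤ ‖x - y‖ := by
    intro k
    have := norm_le_pi_norm (x - y) k
    simpa [Real.norm_eq_abs] using this
  rw [← Finset.sum_sub_distrib]
  calc |∑ j, (w j * biHelmholtzK α (x i - x j) - w j * biHelmholtzK α (y i - y j))|
      ≤ ∑ j, |w j * biHelmholtzK α (x i - x j) - w j * biHelmholtzK α (y i - y j)| :=
        Finset.abs_sum_le_sum_abs _ _
  _ ≤ ∑ j, w j * (2*(1/(4*α^2)) * ‖x - y‖) := by
      apply Finset.sum_le_sum
      intro j _
      rw [← mul_sub, abs_mul, abs_of_nonneg (hw j)]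
      apply mul_le_mul_of_nonneg_left _ (hw j)
      calc |biHelmholtzK α (x i - x j) - biHelmholtzK α (y i - y j)|
          ≤ 1/(4*α^2) * |(x i - x j) - (y i - y j)| := K_lip hα _ _
      _ ≤ 1/(4*α^2) * (2 * ‖x - y‖) := by
          apply mul_le_mul_of_nonneg_left _ (by positivity)
          have h1 := hnorm i
          have h2 := hnorm j
          calc |(x i - x j) - (y i - y j)| = |(x i - y i) - (x j - y j)| := by ring_nf
          _ ≤ |x i - y i| + |x j - y j| := abs_sub _ _
          _ ≤ 2 * ‖x - y‖ := by linarith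
      _ = 2*(1/(4*α^2)) * ‖x - y‖ := by ring
  _ = (∑ j, w j) * (2*(1/(4*α^2)) * ‖x - y‖) := by rw [Finset.sum_mul]
  _ ≤ 1 * (2*(1/(4*α^2)) * ‖x - y‖) := by
      apply mul_le_mul_of_nonneg_right hw1 (by positivity)
  _ = 2*(1/(4*α^2)) * ‖x - y‖ := one_mul _

lemma sumQ_diff (x y : Fin N → ℝ) (i : Fin N) :
    |(∑ j ∈ univ.filter (fun j => j ≠ i),
        w j * (if j < i then G3 α (x i - x j) else -(G3 α (x i - x j)))) -
      ∑ j ∈ univ.filter (fun j => j ≠ i),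
        w j * (if j < i then G3 α (y i - y j) else -(G3 α (y i - y j)))|
      ≤ 2*(3/(4*α^5)) * ‖x - y‖ := by
  have hnorm : ∀ k : Fin N, |x k - y k| ≤ ‖x - y‖ := by
    intro k
    have := norm_le_pi_norm (x - y) k
    simpa [Real.norm_eq_abs] using this
  rw [← Finset.sum_sub_distrib]
  calc |∑ j ∈ univ.filter (fun j => j ≠ i),
        (w j * (if j < i then G3 α (x i - x j) else -(G3 α (x i - x j))) -
         w j * (if j < i then G3 α (y i - y j) else -(G3 α (y i - y j))))|
      ≤ ∑ j ∈ univ.filter (fun j => j ≠ i),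
          |w j * (if j < i then G3 α (x i - x j) else -(G3 α (x i - x j))) -
           w j * (if j < i then G3 α (y i - y j) else -(G3 α (y i - y j)))| :=
        Finset.abs_sum_le_sum_abs _ _
  _ ≤ ∑ j ∈ univ.filter (fun j => j ≠ i), w j * (2*(3/(4*α^5)) * ‖x - y‖) := by
      apply Finset.sum_le_sum
      intro j _
      rw [← mul_sub, abs_mul, abs_of_nonneg (hw j)]
      apply mul_le_mul_of_nonneg_left _ (hw j)
      have hG : |(if j < i then G3 α (x i - x j) else -(G3 α (x i - x j))) -
          (if j < i then G3 α (y i - y j) else -(G3 α (y i - y j)))|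
          = |G3 α (x i - x j) - G3 α (y i - y j)| := by
        split
        · rfl
        · rw [← abs_neg]; ring_nf
      rw [hG]
      calc |G3 α (x i - x j) - G3 α (y i - y j)|
          ≤ 3/(4*α^5) * |(x i - x j) - (y i - y j)| := G3_lip hα _ _
      _ ≤ 3/(4*α^5) * (2 * ‖x - y‖) := by
          apply mul_le_mul_of_nonneg_left _ (by positivity)
          have h1 := hnorm i
          have h2 := hnorm j
          calc |(x i - x j) - (y i - y j)| = |(x i - y i) - (x j - y j)| := by ring_nf
          _ ≤ |x i - y i| + |x j - y j| := abs_sub _ _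
          _ ≤ 2 * ‖x - y‖ := by linarith
      _ = 2*(3/(4*α^5)) * ‖x - y‖ := by ring
  _ = (∑ j ∈ univ.filter (fun j => j ≠ i), w j) * (2*(3/(4*α^5)) * ‖x - y‖) := by
      rw [Finset.sum_mul]
  _ ≤ 1 * (2*(3/(4*α^5)) * ‖x - y‖) := by
      apply mul_le_mul_of_nonneg_right _ (by positivity)
      calc ∑ j ∈ univ.filter (fun j => j ≠ i), w j ≤ ∑ j, w j :=
            Finset.sum_le_sum_of_subset_of_nonneg (Finset.filter_subset _ _)
              (fun j _ _ => hw j)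
      _ ≤ 1 := hw1
  _ = 2*(3/(4*α^5)) * ‖x - y‖ := one_mul _

lemma Fv_coord_abs_le (x : Fin N → ℝ) (i : Fin N) : |Fv α N w x i| ≤ Cb α := by
  unfold Fv Cb
  rw [abs_mul, abs_pow]
  apply mul_le_mul (pow_le_pow_left₀ (abs_nonneg _) (sumP_abs_le hα hw hw1 x i) 2)
    (sumQ_abs_le hα hw hw1 x i) (abs_nonneg _) (by positivity)

lemma Fv_coord_diff_le (x y : Fin N → ℝ) (i : Fin N) :
    |Fv α N w x i - Fv α N w y i| ≤ CL α * ‖x - y‖ := by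
  unfold Fv CL
  set a := ∑ j, w j * biHelmholtzK α (x i - x j) with ha
  set c := ∑ j, w j * biHelmholtzK α (y i - y j) with hc
  set b := ∑ j ∈ univ.filter (fun j => j ≠ i),
      w j * (if j < i then G3 α (x i - x j) else -(G3 α (x i - x j))) with hb
  set d := ∑ j ∈ univ.filter (fun j => j ≠ i),
      w j * (if j < i then G3 α (y i - y j) else -(G3 α (y i - y j))) with hd
  have haM : |a| ≤ 1/(2*α) := sumP_abs_le hα hw hw1 x i
  have hcM : |c| ≤ 1/(2*α) := sumP_abs_le hα hw hw1 y i
  have hdM : |d| ≤ 1/(2*α^4) := sumQ_abs_le hα hw hw1 y i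
  have hbd : |b - d| ≤ 2*(3/(4*α^5)) * ‖x - y‖ := sumQ_diff hα hw hw1 x y i
  have hac : |a - c| ≤ 2*(1/(4*α^2)) * ‖x - y‖ := sumP_diff hα hw hw1 x y i
  have key : a^2*b - c^2*d = a^2*(b-d) + d*((a+c)*(a-c)) := by ring
  calc |a^2*b - c^2*d| = |a^2*(b-d) + d*((a+c)*(a-c))| := by rw [key]
  _ ≤ |a^2*(b-d)| + |d*((a+c)*(a-c))| := abs_add_le _ _
  _ = |a| ^ 2 * |b - d| + |d| * (|a + c| * |a - c|) := by rw [abs_mul, abs_mul, abs_mul, abs_pow]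
  _ ≤ (1/(2*α))^2 * (2*(3/(4*α^5)) * ‖x - y‖) +
      (1/(2*α^4)) * ((2*(1/(2*α))) * (2*(1/(4*α^2)) * ‖x - y‖)) := by
      have h1 : |a| ^ 2 * |b - d| ≤ (1/(2*α))^2 * (2*(3/(4*α^5)) * ‖x - y‖) :=
        mul_le_mul (pow_le_pow_left₀ (abs_nonneg _) haM 2) hbd (abs_nonneg _) (by positivity)
      have hsum : |a + c| ≤ 2*(1/(2*α)) := by
        calc |a + c| ≤ |a| + |c| := abs_add_le _ _
        _ ≤ 2*(1/(2*α)) := by linarith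
      have h2 : |d| * (|a + c| * |a - c|) ≤ (1/(2*α^4)) * ((2*(1/(2*α))) * (2*(1/(4*α^2)) * ‖x - y‖)) := by
        apply mul_le_mul hdM _ (by positivity) (by positivity)
        exact mul_le_mul hsum hac (abs_nonneg _) (by positivity)
      linarith
  _ = ((1/(2*α))^2 * (2*(3/(4*α^5))) + (1/(2*α^4)) * (2*(1/(2*α))) * (2*(1/(4*α^2)))) * ‖x - y‖ := by
      ring

omit hw hw1 in
lemma CL_nonneg : 0 ≤ CL α := by unfold CL; positivity
omit hw hw1 in
lemma Cb_nonneg : 0 ≤ Cb α := by unfold Cb; positivity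

omit hw hw1 in
lemma Fv_norm_le (hw : ∀ j, 0 ≤ w j) (hw1 : ∑ j, w j ≤ 1) (x : Fin N → ℝ) :
    ‖Fv α N w x‖ ≤ Cb α := by
  apply pi_norm_le_iff_of_nonneg (Cb_nonneg hα) |>.2
  intro i
  rw [Real.norm_eq_abs]
  exact Fv_coord_abs_le hα hw hw1 x i

omit hw hw1 in
lemma Fv_lipschitz (hw : ∀ j, 0 ≤ w j) (hw1 : ∑ j, w j ≤ 1) :
    LipschitzWith (Real.toNNReal (CL α)) (Fv α N w) := by
  apply LipschitzWith.of_dist_le_mul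
  intro x y
  rw [dist_eq_norm, dist_eq_norm, Real.coe_toNNReal _ (CL_nonneg hα)]
  apply pi_norm_le_iff_of_nonneg (mul_nonneg (CL_nonneg hα) (norm_nonneg _)) |>.2
  intro i
  rw [Real.norm_eq_abs]
  have := Fv_coord_diff_le hα hw hw1 x y i
  simpa [Pi.sub_apply] using this
end veloc

section sign
variable {α : ℝ} (hα : 0 < α) {N : ℕ} {w : Fin N → ℝ} (hw : ∀ j, 0 ≤ w j)
include hα hw

lemma Fv_sign {i j : Fin N} (hij : (i:ℕ)+1 = (j:ℕ)) (z : Fin N → ℝ) (hz : z i = z j) :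
    0 ≤ Fv α N w z j - Fv α N w z i := by
  have hij' : i < j := by rw [Fin.lt_def]; omega
  have hne : i ≠ j := ne_of_lt hij'
  unfold Fv
  have hP : (∑ k, w k * biHelmholtzK α (z j - z k)) = ∑ k, w k * biHelmholtzK α (z i - z k) := by
    rw [← hz]
  rw [hP]
  rw [← mul_sub]
  have hQ : ((∑ k ∈ univ.filter (fun k => k ≠ j),
        w k * (if k < j then G3 α (z j - z k) else -(G3 α (z j - z k)))) -
      ∑ k ∈ univ.filter (fun k => k ≠ i),
        w k * (if k < i then G3 α (z i - z k) else -(G3 α (z i - z k))))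
      = (w i + w j) * G3 α 0 := by
    have hfil : ∀ m : Fin N, univ.filter (fun k => k ≠ m) = univ.erase m := by
      intro m
      ext k
      simp [Finset.mem_erase, and_comm]
    rw [hfil i, hfil j, ← hz]
    have hmemi : i ∈ univ.erase j := Finset.mem_erase.2 ⟨hne, Finset.mem_univ i⟩
    have hmemj : j ∈ univ.erase i := Finset.mem_erase.2 ⟨hne.symm, Finset.mem_univ j⟩
    rw [← Finset.sum_erase_add (univ.erase j)
      (fun k => w k * (if k < j then G3 α (z i - z k) else -(G3 α (z i - z k)))) hmemi]
    rw [← Finset.sum_erase_add (univ.erase i)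
      (fun k => w k * (if k < i then G3 α (z i - z k) else -(G3 α (z i - z k)))) hmemj]
    have hcomm : (univ.erase j).erase i = (univ.erase i).erase j := Finset.erase_right_comm
    have hcong : ∑ k ∈ (univ.erase j).erase i,
        w k * (if k < j then G3 α (z i - z k) else -(G3 α (z i - z k)))
        = ∑ k ∈ (univ.erase i).erase j,
        w k * (if k < i then G3 α (z i - z k) else -(G3 α (z i - z k))) := by
      rw [hcomm]
      apply Finset.sum_congr rfl
      intro k hk
      have hk' : k ∈ (univ.erase j).erase i := by rw [hcomm]; exact hk
      have hki : k ≠ i := (Finset.mem_erase.1 hk').1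
      have hkj : k ≠ j := (Finset.mem_erase.1 hk).1
      congr 1
      have hiff : (k < j) ↔ (k < i) := by
        rw [Fin.lt_def, Fin.lt_def]
        have h1 : (k:ℕ) ≠ i := fun h => hki (Fin.ext h)
        omega
      by_cases hk2 : k < i
      · rw [if_pos hk2, if_pos (hiff.2 hk2)]
      · rw [if_neg hk2, if_neg (fun h => hk2 (hiff.1 h))]
    rw [hcong]
    have hival : w i * (if i < j then G3 α (z i - z i) else -(G3 α (z i - z i)))
        = w i * G3 α 0 := by rw [if_pos hij', sub_self]
    have hjval : w j * (if j < i then G3 α (z i - z j) else -(G3 α (z i - z j)))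
        = -(w j * G3 α 0) := by
      rw [if_neg (asymm hij'), hz, sub_self]
      ring
    rw [hival, hjval]
    ring
  rw [hQ]
  have := G3_zero_nonneg hα
  have := hw i
  have := hw j
  positivity

lemma Fv_adj_lower (hw1 : ∑ j, w j ≤ 1) {i j : Fin N} (hij : (i:ℕ)+1 = (j:ℕ))
    (x : Fin N → ℝ) :
    -(2 * CL α) * |x j - x i| ≤ Fv α N w x j - Fv α N w x i := by
  have hne : i ≠ j := by intro h; rw [h] at hij; omega
  set z := Function.update x j (x i) with hzdef
  have hz_i : z i = x i := Function.update_of_ne hne _ _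
  have hz_j : z j = x i := Function.update_self _ _ _
  have hnorm : ‖x - z‖ ≤ |x j - x i| := by
    apply pi_norm_le_iff_of_nonneg (abs_nonneg _) |>.2
    intro k
    rw [Pi.sub_apply, Real.norm_eq_abs]
    by_cases hk : k = j
    · subst hk; rw [hz_j]
    · rw [hzdef, Function.update_of_ne hk, sub_self, abs_zero]
      exact abs_nonneg _
  have hsign : 0 ≤ Fv α N w z j - Fv α N w z i := Fv_sign hα hw hij z (by rw [hz_i, hz_j])
  have h1 : |Fv α N w x j - Fv α N w z j| ≤ CL α * |x j - x i| :=
    (Fv_coord_diff_le hα hw hw1 x z j).trans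
      (mul_le_mul_of_nonneg_left hnorm (CL_nonneg hα))
  have h2 : |Fv α N w x i - Fv α N w z i| ≤ CL α * |x j - x i| :=
    (Fv_coord_diff_le hα hw hw1 x z i).trans
      (mul_le_mul_of_nonneg_left hnorm (CL_nonneg hα))
  have h1' := abs_le.1 h1
  have h2' := abs_le.1 h2
  have : -(2 * CL α) * |x j - x i| = -(CL α * |x j - x i|) + -(CL α * |x j - x i|) := by ring
  linarith [h1'.1, h1'.2, h2'.1, h2'.2]
end sign

section glob
open Set
lemma global_solution {E : Type*} [NormedAddCommGroup E] [NormedSpace ℝ E] [CompleteSpace E]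
    {F : E → E} {K : NNReal} {C : ℝ} (hF : LipschitzWith K F) (hC : 0 ≤ C)
    (hbound : ∀ x, ‖F x‖ ≤ C) (x0 : E) :
    ∃ sol : ℝ → E, sol 0 = x0 ∧ ∀ t : ℝ, HasDerivAt sol (F (sol t)) t := by
  have hpl : ∀ n : ℕ, IsPicardLindelof (fun _ x => F x) (tmin := -((n:ℝ)+1)) (tmax := (n:ℝ)+1)
      ⟨0, by have := (Nat.cast_nonneg n : (0:ℝ) ≤ n); constructor <;> linarith⟩ x0
      (⟨C, hC⟩ * ((n:NNReal)+1)) 0 ⟨C, hC⟩ K := by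
    intro n
    apply IsPicardLindelof.of_time_independent (fun x _ => hbound x) hF.lipschitzOnWith
    simp
    exact le_of_eq (by norm_cast)
  have hex : ∀ n : ℕ, ∃ g : ℝ → E, g 0 = x0 ∧ ∀ t ∈ Icc (-((n:ℝ)+1)) ((n:ℝ)+1),
      HasDerivWithinAt g (F (g t)) (Icc (-((n:ℝ)+1)) ((n:ℝ)+1)) t :=
    fun n => (hpl n).exists_eq_forall_mem_Icc_hasDerivWithinAt₀
  choose f hf0 hfd using hex
  have hfd' : ∀ n : ℕ, ∀ t ∈ Ioo (-((n:ℝ)+1)) ((n:ℝ)+1), HasDerivAt (f n) (F (f n t)) t :=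
    fun n t ht => (hfd n t (Ioo_subset_Icc_self ht)).hasDerivAt (Icc_mem_nhds ht.1 ht.2)
  -- agreement
  have hagree : ∀ m n : ℕ, ∀ t : ℝ, |t| < (m:ℝ)+1 → |t| < (n:ℝ)+1 → f m t = f n t := by
    intro m n t htm htn
    set c : ℝ := min ((m:ℝ)+1) ((n:ℝ)+1) with hc
    have hc0 : (0:ℝ) < c := lt_min (by positivity) (by positivity)
    have htc : t ∈ Ioo (-c) c := Set.mem_Ioo.2 (abs_lt.1 (lt_min htm htn))
    have hsub : Ioo (-c) c ⊆ Ioo (-((m:ℝ)+1)) ((m:ℝ)+1) :=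
      Ioo_subset_Ioo (neg_le_neg (min_le_left _ _)) (min_le_left _ _)
    have hsub' : Ioo (-c) c ⊆ Ioo (-((n:ℝ)+1)) ((n:ℝ)+1) :=
      Ioo_subset_Ioo (neg_le_neg (min_le_right _ _)) (min_le_right _ _)
    have h0c : (0:ℝ) ∈ Ioo (-c) c := Set.mem_Ioo.2 ⟨by linarith, hc0⟩
    exact ODE_solution_unique_of_mem_Ioo (v := fun _ x => F x) (s := fun _ => univ)
      (fun _ _ => hF.lipschitzOnWith) h0c
      (fun s hs => ⟨hfd' m s (hsub hs), trivial⟩)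
      (fun s hs => ⟨hfd' n s (hsub' hs), trivial⟩)
      (by rw [hf0 m, hf0 n]) htc
  refine ⟨fun t => f ⌊|t|⌋₊ t, by simpa using hf0 _, ?_⟩
  intro t
  set n : ℕ := ⌊|t|⌋₊ with hn
  have hlt : |t| < (n:ℝ)+1 := Nat.lt_floor_add_one _
  have hev : (fun s => f ⌊|s|⌋₊ s) =ᶠ[nhds t] f n := by
    have hopen : IsOpen {s : ℝ | |s| < (n:ℝ)+1} := by
      have : {s : ℝ | |s| < (n:ℝ)+1} = Metric.ball (0:ℝ) ((n:ℝ)+1) := by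
        ext s; simp [Metric.mem_ball, Real.dist_eq]
      rw [this]; exact Metric.isOpen_ball
    filter_upwards [hopen.mem_nhds hlt] with s hs
    exact hagree _ n s (Nat.lt_floor_add_one _) hs
  have hder : HasDerivAt (f n) (F (f n t)) t :=
    hfd' n t (Set.mem_Ioo.2 (abs_lt.1 hlt))
  have : f n t = f ⌊|t|⌋₊ t := rfl
  rw [show F (f ⌊|t|⌋₊ t) = F (f n t) from rfl]
  exact hder.congr_of_eventuallyEq hev

end glob

section inv
variable {α : ℝ} (hα : 0 < α) {N : ℕ} {w : Fin N → ℝ} (hw : ∀ j, 0 ≤ w j)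
  (hw1 : ∑ j, w j ≤ 1)
include hα hw hw1

lemma invariance (sol : ℝ → Fin N → ℝ)
    (hsol : ∀ t : ℝ, HasDerivAt sol (Fv α N w (sol t)) t)
    (h0 : ∀ i j : Fin N, i < j → sol 0 i < sol 0 j) :
    ∀ t : ℝ, 0 ≤ t → ∀ i j : Fin N, i < j → sol t i < sol t j := by
  have hcoord : ∀ (t : ℝ) (i : Fin N), HasDerivAt (fun s => sol s i) (Fv α N w (sol t) i) t :=
    fun t i => (hasDerivAt_pi.1 (hsol t)) i
  have hcont : ∀ i : Fin N, Continuous (fun s => sol s i) := by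
    intro i
    apply continuous_iff_continuousAt.2
    exact fun t => (hcoord t i).continuousAt
  -- adjacent claim
  have adj : ∀ t : ℝ, 0 ≤ t → ∀ p : Fin N × Fin N, ((p.1:ℕ)+1 = (p.2:ℕ)) →
      sol t p.1 < sol t p.2 := by
    by_contra hcon
    push_neg at hcon
    obtain ⟨t1, ht1, q1, hq1, hq1le⟩ := hcon
    set S : Set ℝ :=
      {t | 0 ≤ t ∧ ∃ p : Fin N × Fin N, ((p.1:ℕ)+1 = (p.2:ℕ)) ∧ sol t p.2 ≤ sol t p.1} with hS
    have hSclosed : IsClosed S := by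
      have : S = Set.Ici (0:ℝ) ∩
          ⋃ p : Fin N × Fin N,
            {t | ((p.1:ℕ)+1 = (p.2:ℕ)) ∧ sol t p.2 ≤ sol t p.1} := by
        ext t
        simp [hS, Set.mem_iUnion]
      rw [this]
      apply isClosed_Ici.inter
      apply isClosed_iUnion_of_finite
      intro p
      by_cases hp : ((p.1:ℕ)+1 = (p.2:ℕ))
      · have : {t : ℝ | ((p.1:ℕ)+1 = (p.2:ℕ)) ∧ sol t p.2 ≤ sol t p.1}
            = {t : ℝ | sol t p.2 ≤ sol t p.1} := by ext t; simp [hp]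
        rw [this]
        exact isClosed_le (hcont p.2) (hcont p.1)
      · have : {t : ℝ | ((p.1:ℕ)+1 = (p.2:ℕ)) ∧ sol t p.2 ≤ sol t p.1} = ∅ := by
          ext t; simp [hp]
        rw [this]
        exact isClosed_empty
    have hSne : S.Nonempty := ⟨t1, ht1, q1, hq1, hq1le⟩
    have hbdd : BddBelow S := ⟨0, fun s hs => hs.1⟩
    set T := sInf S with hT
    have hTS : T ∈ S := hSclosed.csInf_mem hSne hbdd
    have hT0 : 0 ≤ T := hTS.1
    obtain ⟨q, hq, hqle⟩ := hTS.2
    have hqlt : q.1 < q.2 := by rw [Fin.lt_def]; omega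
    have hTpos : 0 < T := by
      rcases eq_or_lt_of_le hT0 with h | h
      · exfalso; rw [← h] at hqle; exact absurd hqle (not_le.2 (h0 q.1 q.2 hqlt))
      · exact h
    have hbefore : ∀ s : ℝ, 0 ≤ s → s < T → ∀ p : Fin N × Fin N,
        ((p.1:ℕ)+1 = (p.2:ℕ)) → sol s p.1 < sol s p.2 := by
      intro s hs0 hsT p hp
      by_contra hle
      push_neg at hle
      have : s ∈ S := ⟨hs0, p, hp, hle⟩
      exact absurd (csInf_le hbdd this) (not_le.2 hsT)
    set c := 2 * CL α with hc
    have hc0 : 0 ≤ c := by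
      have := CL_nonneg hα; linarith
    set u : ℝ → ℝ := fun s => sol s q.2 - sol s q.1 with hu
    set g : ℝ → ℝ := fun s => u s * Real.exp (c * s) with hg
    have hu' : ∀ s : ℝ, HasDerivAt u (Fv α N w (sol s) q.2 - Fv α N w (sol s) q.1) s :=
      fun s => (hcoord s q.2).sub (hcoord s q.1)
    have hE : ∀ s : ℝ, HasDerivAt (fun s => Real.exp (c * s)) (c * Real.exp (c * s)) s := by
      intro s
      have h1 : HasDerivAt (fun s : ℝ => c * s) c s := by
        simpa using (hasDerivAt_id s).const_mul c
      simpa [mul_comm] using h1.exp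
    have hg' : ∀ s : ℝ, HasDerivAt g
        (((Fv α N w (sol s) q.2 - Fv α N w (sol s) q.1) + c * u s) * Real.exp (c * s)) s := by
      intro s
      have := (hu' s).fun_mul (hE s)
      refine this.congr_deriv ?_
      ring
    have hmono : MonotoneOn g (Set.Icc 0 T) := by
      apply monotoneOn_of_deriv_nonneg (convex_Icc 0 T)
      · apply Continuous.continuousOn
        apply continuous_iff_continuousAt.2
        exact fun s => (hg' s).continuousAt
      · intro s hs
        exact (hg' s).differentiableAt.differentiableWithinAt
      · intro s hs
        rw [interior_Icc] at hs
        rw [(hg' s).deriv]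
        have hus : 0 < u s := by
          have := hbefore s hs.1.le hs.2 q hq
          simp only [hu]; linarith
        have hlow := Fv_adj_lower hα hw hw1 hq (sol s)
        rw [abs_of_pos (show (0:ℝ) < sol s q.2 - sol s q.1 from hus)] at hlow
        have h1 : 0 ≤ (Fv α N w (sol s) q.2 - Fv α N w (sol s) q.1) + c * u s := by
          simp only [hu, hc] at *
          nlinarith
        exact mul_nonneg h1 (Real.exp_pos _).le
    have hg0 : 0 < g 0 := by
      have := h0 q.1 q.2 hqlt
      simp only [hg, hu, mul_zero, Real.exp_zero, mul_one]
      linarith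
    have hgT : g T ≤ 0 := by
      apply mul_nonpos_of_nonpos_of_nonneg
      · simp only [hu]; linarith
      · exact (Real.exp_pos _).le
    have := hmono (Set.left_mem_Icc.2 hT0) (Set.right_mem_Icc.2 hT0) hT0
    linarith
  -- full claim via strict monotonicity
  intro t ht i j hij
  match N, i, j with
  | (n+1), i, j =>
    have hsm : StrictMono (fun k : Fin (n+1) => sol t k) := by
      apply Fin.strictMono_iff_lt_succ.2
      intro k
      exact adj t ht (Fin.castSucc k, Fin.succ k) (by simp)
    exact hsm hij
end inv

/-- Particle no-crossing theorem: the IVP `ẋ = v(x)`, `x(0) = x⁰` with `x⁰` in the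
ordered cone `D = {x : x₁ < ⋯ < x_N}` has a unique global solution on `[0,∞)` which
remains in `D` for all time. -/
theorem stmt11 (α : ℝ) (hα : 0 < α) (N : ℕ) (w : Fin N → ℝ)
    (hw : ∀ j, 0 ≤ w j) (hw1 : ∑ j, w j ≤ 1)
    (x0 : Fin N → ℝ) (hx0 : ∀ i j : Fin N, i < j → x0 i < x0 j) :
    ∃ x : ℝ → Fin N → ℝ,
      (x 0 = x0 ∧
        (∀ t : ℝ, 0 ≤ t → ∀ i j : Fin N, i < j → x t i < x t j) ∧
        (∀ t : ℝ, 0 ≤ t → ∀ i : Fin N,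
          HasDerivAt (fun s => x s i) (particleVelocity α N w (x t) i) t)) ∧
      (∀ y : ℝ → Fin N → ℝ,
        (y 0 = x0 ∧
          (∀ t : ℝ, 0 ≤ t → ∀ i j : Fin N, i < j → y t i < y t j) ∧
          (∀ t : ℝ, 0 ≤ t → ∀ i : Fin N,
            HasDerivAt (fun s => y s i) (particleVelocity α N w (y t) i) t)) →
        ∀ t : ℝ, 0 ≤ t → y t = x t) := by
  obtain ⟨sol, hsol0, hsolder⟩ :=
    global_solution (Fv_lipschitz hα hw hw1) (Cb_nonneg hα) (Fv_norm_le hα hw hw1) x0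
  have hinv : ∀ t : ℝ, 0 ≤ t → ∀ i j : Fin N, i < j → sol t i < sol t j :=
    invariance hα hw hw1 sol hsolder (by rw [hsol0]; exact hx0)
  refine ⟨sol, ⟨hsol0, hinv, ?_⟩, ?_⟩
  · -- derivative statement
    intro t ht i
    have heq : particleVelocity α N w (sol t) = Fv α N w (sol t) :=
      Fv_eq_particleVelocity hα (hinv t ht)
    rw [heq]
    exact (hasDerivAt_pi.1 (hsolder t)) i
  · -- uniqueness
    rintro y ⟨hy0, hyinv, hyder⟩ t ht
    have hyv : ∀ s : ℝ, 0 ≤ s → HasDerivAt y (Fv α N w (y s)) s := by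
      intro s hs
      apply hasDerivAt_pi.2
      intro i
      have heq : particleVelocity α N w (y s) = Fv α N w (y s) :=
        Fv_eq_particleVelocity hα (hyinv s hs)
      rw [← heq]
      exact hyder s hs i
    have hsv : ∀ s : ℝ, 0 ≤ s → HasDerivAt sol (Fv α N w (sol s)) s := fun s _ => hsolder s
    have key : Set.EqOn y sol (Set.Icc 0 t) := by
      apply ODE_solution_unique (v := fun _ z => Fv α N w z)
        (K := Real.toNNReal (CL α)) (fun _ => Fv_lipschitz hα hw hw1)
      · apply continuousOn_of_forall_continuousAt
        intro s hs
        exact (hyv s hs.1).continuousAt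
      · intro s hs
        exact (hyv s hs.1).hasDerivWithinAt
      · apply continuousOn_of_forall_continuousAt
        intro s hs
        exact (hsv s hs.1).continuousAt
      · intro s hs
        exact (hsv s hs.1).hasDerivWithinAt
      · rw [hy0, hsol0]
    exact key (Set.mem_Icc.2 ⟨ht, le_refl t⟩)
end

section
/- Let μ be a finite positive Borel measure on ℝ with ‖μ‖ ≤ 1 and let c(·,t) : ℝ → ℝ be strictly increasing Borel functions (t ≥ 0) with c(x,·) ∈ C¹ solving the characteristic ODE of the Geometric Thin-Film equation. Then for x < y and t ≥ 0: c(y,t) − c(x,t) ≤ (y−x)e^{At} + (Γ_{x,y}/A)(e^{At}−1), where A = 2‖K‖_∞(2Lip(K)‖K'''‖_∞ + ‖K‖_∞Lip(K''')) and Γ_{x,y} = ‖K‖_∞²‖K'''‖_∞(μ[x,y)+μ(x,y]). -/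
open MeasureTheory

lemma measurable_biHelmholtzK (α : ℝ) : Measurable (biHelmholtzK α) := by
  unfold biHelmholtzK; fun_prop

lemma measurable_K3 (α : ℝ) : Measurable (iteratedDeriv 3 (biHelmholtzK α)) := by
  have h : iteratedDeriv 3 (biHelmholtzK α) = deriv (iteratedDeriv 2 (biHelmholtzK α)) :=
    iteratedDeriv_succ
  rw [h]; exact measurable_deriv _

/-- Upper separation estimate for characteristic curves of the Geometric Thin-Film
equation: `c(y,t) − c(x,t) ≤ (y−x)e^{At} + (Γ_{x,y}/A)(e^{At}−1)`. -/
theorem stmt13 (α : ℝ) (hα : 0 < α)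
    (μ : Measure ℝ) [IsFiniteMeasure μ] (hμ : μ Set.univ ≤ 1)
    (MK LK MK3 LK3 : ℝ)
    (hMK : ∀ z : ℝ, |biHelmholtzK α z| ≤ MK)
    (hLK : ∀ a b : ℝ, |biHelmholtzK α a - biHelmholtzK α b| ≤ LK * |a - b|)
    (hMK3 : ∀ z : ℝ, z ≠ 0 → |iteratedDeriv 3 (biHelmholtzK α) z| ≤ MK3)
    (hLK3p : ∀ a b : ℝ, 0 < a → 0 < b →
      |iteratedDeriv 3 (biHelmholtzK α) a - iteratedDeriv 3 (biHelmholtzK α) b| ≤ LK3 * |a - b|)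
    (hLK3m : ∀ a b : ℝ, a < 0 → b < 0 →
      |iteratedDeriv 3 (biHelmholtzK α) a - iteratedDeriv 3 (biHelmholtzK α) b| ≤ LK3 * |a - b|)
    (A : ℝ) (hA : A = 2 * MK * (2 * LK * MK3 + MK * LK3)) (hApos : 0 < A)
    (c : ℝ → ℝ → ℝ)
    (hinit : ∀ x : ℝ, c x 0 = x)
    (hmono : ∀ t : ℝ, 0 ≤ t → StrictMono (fun x => c x t))
    (hmeas : ∀ t : ℝ, 0 ≤ t → Measurable (fun x => c x t))
    (hode : ∀ x : ℝ, ∀ t : ℝ, 0 ≤ t →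
      HasDerivAt (fun s => c x s)
        ((∫ z, biHelmholtzK α (c x t - c z t) ∂μ) ^ 2 *
          ∫ z in {x}ᶜ, iteratedDeriv 3 (biHelmholtzK α) (c x t - c z t) ∂μ) t) :
    ∀ x y : ℝ, x < y → ∀ t : ℝ, 0 ≤ t →
      c y t - c x t ≤ (y - x) * Real.exp (A * t) +
        (MK ^ 2 * MK3 * ((μ (Set.Ico x y)).toReal + (μ (Set.Ioc x y)).toReal) / A) *
          (Real.exp (A * t) - 1) := by
  intro x y hxy t ht
  set K := biHelmholtzK α with hK
  set D := iteratedDeriv 3 (biHelmholtzK α) with hD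
  have hmK : Measurable K := measurable_biHelmholtzK α
  have hmD : Measurable D := measurable_K3 α
  -- nonnegativity of the constants
  have hMK0 : 0 ≤ MK := le_trans (abs_nonneg _) (hMK 0)
  have hLK0 : 0 ≤ LK := by
    have h := hLK 0 1
    have h2 : (0:ℝ) ≤ |K 0 - K 1| := abs_nonneg _
    norm_num at h
    linarith
  have hMK30 : 0 ≤ MK3 := le_trans (abs_nonneg _) (hMK3 1 one_ne_zero)
  have hLK30 : 0 ≤ LK3 := by
    have h := hLK3p 1 2 one_pos two_pos
    have h2 : (0:ℝ) ≤ |D 1 - D 2| := abs_nonneg _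
    norm_num at h
    linarith
  have hμ1 : (μ Set.univ).toReal ≤ 1 := by
    have := ENNReal.toReal_mono (by norm_num) hμ
    simpa using this
  have hμs : ∀ S : Set ℝ, (μ S).toReal ≤ 1 := fun S =>
    le_trans (ENNReal.toReal_mono (measure_ne_top μ _) (measure_mono (Set.subset_univ S))) hμ1
  set ε : ℝ := MK ^ 2 * MK3 * ((μ (Set.Ico x y)).toReal + (μ (Set.Ioc x y)).toReal) with hε
  set f : ℝ → ℝ := fun s => c y s - c x s with hf
  set f' : ℝ → ℝ := fun s =>
    ((∫ z, K (c y s - c z s) ∂μ) ^ 2 * ∫ z in {y}ᶜ, D (c y s - c z s) ∂μ) -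
      ((∫ z, K (c x s - c z s) ∂μ) ^ 2 * ∫ z in {x}ᶜ, D (c x s - c z s) ∂μ) with hf'
  have hderiv : ∀ s : ℝ, 0 ≤ s → HasDerivAt f (f' s) s := fun s hs =>
    (hode y s hs).sub (hode x s hs)
  -- main bound
  have hbound : ∀ s ∈ Set.Ico (0:ℝ) t, ‖f' s‖ ≤ A * ‖f s‖ + ε := by
    rintro s ⟨hs0, _⟩
    have hm : Measurable (fun z => c z s) := hmeas s hs0
    have hsm : StrictMono (fun z => c z s) := hmono s hs0
    have hu : 0 < f s := sub_pos.2 (hsm hxy)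
    have hfs : ‖f s‖ = f s := abs_of_pos hu
    set H : ℝ → ℝ := fun w => ∫ z, K (c w s - c z s) ∂μ with hH
    set I : ℝ → ℝ := fun w => ∫ z in {w}ᶜ, D (c w s - c z s) ∂μ with hI
    -- integrability of the K-integrand
    have hintK : ∀ w : ℝ, Integrable (fun z => K (c w s - c z s)) μ := by
      intro w
      refine Integrable.mono' (integrable_const MK)
        ((hmK.comp (measurable_const.sub hm)).aestronglyMeasurable) ?_
      filter_upwards with z using hMK _
    -- |H w| ≤ MK
    have hHbd : ∀ w : ℝ, |H w| ≤ MK := by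
      intro w
      calc |H w| ≤ MK * (μ Set.univ).toReal := by
            rw [← Real.norm_eq_abs]
            exact norm_integral_le_of_norm_le_const (by filter_upwards with z using hMK _)
        _ ≤ MK * 1 := by
            exact mul_le_mul_of_nonneg_left hμ1 hMK0
        _ = MK := mul_one MK
    -- |H y - H x| ≤ LK * f s
    have hHdiff : |H y - H x| ≤ LK * f s := by
      have e : H y - H x = ∫ z, (K (c y s - c z s) - K (c x s - c z s)) ∂μ :=
        (integral_sub (hintK y) (hintK x)).symm
      rw [e, ← Real.norm_eq_abs]
      calc ‖∫ z, (K (c y s - c z s) - K (c x s - c z s)) ∂μ‖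
          ≤ (LK * f s) * (μ Set.univ).toReal := by
            refine norm_integral_le_of_norm_le_const ?_
            filter_upwards with z
            rw [Real.norm_eq_abs]
            have h := hLK (c y s - c z s) (c x s - c z s)
            have e2 : c y s - c z s - (c x s - c z s) = f s := by simp only [hf]; ring
            rw [e2, abs_of_pos hu] at h
            exact h
        _ ≤ (LK * f s) * 1 := by
            exact mul_le_mul_of_nonneg_left hμ1 (mul_nonneg hLK0 hu.le)
        _ = LK * f s := mul_one _
    -- integrability of D-integrand on sets avoiding the diagonal point
    have hDint : ∀ w : ℝ, ∀ S : Set ℝ, MeasurableSet S → (w ∉ S) →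
        IntegrableOn (fun z => D (c w s - c z s)) S μ := by
      intro w S hS hw
      refine Integrable.mono' (integrable_const MK3)
        ((hmD.comp (measurable_const.sub hm)).aestronglyMeasurable) ?_
      filter_upwards [ae_restrict_mem hS] with z hz
      refine hMK3 _ (sub_ne_zero.2 fun h => hw ?_)
      have : z = w := hsm.injective h.symm
      rwa [this] at hz
    -- pointwise |D| bound on a set avoiding w, giving set-integral bound
    have hDbd : ∀ w : ℝ, ∀ S : Set ℝ, MeasurableSet S → (w ∉ S) →
        |∫ z in S, D (c w s - c z s) ∂μ| ≤ MK3 * (μ S).toReal := by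
      intro w S hS hw
      rw [← Real.norm_eq_abs]
      have := norm_integral_le_of_norm_le_const (μ := μ.restrict S)
        (f := fun z => D (c w s - c z s)) (C := MK3) ?_
      · rwa [measureReal_restrict_apply_univ, measureReal_def] at this
      · filter_upwards [ae_restrict_mem hS] with z hz
        refine hMK3 _ (sub_ne_zero.2 fun h => hw ?_)
        have : z = w := hsm.injective h.symm
        rwa [this] at hz
    -- |I w| ≤ MK3
    have hIbd : ∀ w : ℝ, |I w| ≤ MK3 := by
      intro w
      calc |I w| ≤ MK3 * (μ {w}ᶜ).toReal :=
            hDbd w {w}ᶜ (measurableSet_singleton w).compl (by simp)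
        _ ≤ MK3 * 1 := mul_le_mul_of_nonneg_left (hμs _) hMK30
        _ = MK3 := mul_one _
    -- splitting of I y and I x
    have hIio : MeasurableSet (Set.Iio x) := measurableSet_Iio
    have hIco : MeasurableSet (Set.Ico x y) := measurableSet_Ico
    have hIoc : MeasurableSet (Set.Ioc x y) := measurableSet_Ioc
    have hIoi : MeasurableSet (Set.Ioi y) := measurableSet_Ioi
    have hyIio : y ∉ Set.Iio x := by simp [Set.mem_Iio]; exact hxy.le
    have hxIio : x ∉ Set.Iio x := by simp
    have hyIco : y ∉ Set.Ico x y := by simp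
    have hxIoc : x ∉ Set.Ioc x y := by simp
    have hyIoi : y ∉ Set.Ioi y := by simp
    have hxIoi : x ∉ Set.Ioi y := by simp [Set.mem_Ioi]; exact hxy.le
    have splitY : I y = (∫ z in Set.Iio x, D (c y s - c z s) ∂μ) +
        (∫ z in Set.Ico x y, D (c y s - c z s) ∂μ) +
        (∫ z in Set.Ioi y, D (c y s - c z s) ∂μ) := by
      have d1 : Disjoint (Set.Iio x) (Set.Ico x y) := by
        rw [Set.disjoint_left]; rintro z hz ⟨hz2, _⟩; exact absurd hz2 (not_le.2 hz)
      have d2 : Disjoint (Set.Iio y) (Set.Ioi y) := by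
        rw [Set.disjoint_left]; intro z hz hz2; exact absurd (Set.mem_Iio.1 hz) (not_lt.2 (Set.mem_Ioi.1 hz2).le)
      have e1 : Set.Iio x ∪ Set.Ico x y = Set.Iio y := Set.Iio_union_Ico_eq_Iio hxy.le
      have e2 : Set.Iio y ∪ Set.Ioi y = ({y}ᶜ : Set ℝ) := Set.Iio_union_Ioi
      rw [hI]
      simp only
      rw [← e2, setIntegral_union d2 hIoi
        (by rw [← e1]; exact (hDint y _ (hIio.union hIco) (by rw [e1]; simp))
          ) (hDint y _ hIoi hyIoi),
        ← e1, setIntegral_union d1 hIco (hDint y _ hIio hyIio) (hDint y _ hIco hyIco)]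
    have splitX : I x = (∫ z in Set.Iio x, D (c x s - c z s) ∂μ) +
        (∫ z in Set.Ioc x y, D (c x s - c z s) ∂μ) +
        (∫ z in Set.Ioi y, D (c x s - c z s) ∂μ) := by
      have d1 : Disjoint (Set.Ioc x y) (Set.Ioi y) := by
        rw [Set.disjoint_left]; rintro z ⟨_, hz2⟩ hz3; exact absurd hz3 (not_lt.2 hz2)
      have d2 : Disjoint (Set.Iio x) (Set.Ioi x) := by
        rw [Set.disjoint_left]; intro z hz hz2; exact absurd (Set.mem_Iio.1 hz) (not_lt.2 (Set.mem_Ioi.1 hz2).le)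
      have e1 : Set.Ioc x y ∪ Set.Ioi y = Set.Ioi x := Set.Ioc_union_Ioi_eq_Ioi hxy.le
      have e2 : Set.Iio x ∪ Set.Ioi x = ({x}ᶜ : Set ℝ) := Set.Iio_union_Ioi
      rw [hI]
      simp only
      rw [← e2, setIntegral_union d2 measurableSet_Ioi (hDint x _ hIio hxIio)
          (by rw [← e1]; exact hDint x _ (hIoc.union hIoi) (by rw [e1]; simp)),
        ← e1, setIntegral_union d1 hIoi (hDint x _ hIoc hxIoc) (hDint x _ hIoi hxIoi), add_assoc]
    -- Lipschitz bounds on the outer regions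
    have houter : ∀ S : Set ℝ, MeasurableSet S →
        (∀ z ∈ S, |D (c y s - c z s) - D (c x s - c z s)| ≤ LK3 * f s) →
        IntegrableOn (fun z => D (c y s - c z s)) S μ →
        IntegrableOn (fun z => D (c x s - c z s)) S μ →
        |(∫ z in S, D (c y s - c z s) ∂μ) - ∫ z in S, D (c x s - c z s) ∂μ| ≤ LK3 * f s := by
      intro S hS hptw hi1 hi2
      rw [← integral_sub hi1 hi2, ← Real.norm_eq_abs]
      calc ‖∫ z in S, (D (c y s - c z s) - D (c x s - c z s)) ∂μ‖
          ≤ (LK3 * f s) * ((μ.restrict S) Set.univ).toReal := by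
            refine norm_integral_le_of_norm_le_const ?_
            filter_upwards [ae_restrict_mem hS] with z hz using hptw z hz
        _ ≤ (LK3 * f s) * 1 := by
            rw [Measure.restrict_apply_univ]
            exact mul_le_mul_of_nonneg_left (hμs _) (mul_nonneg hLK30 hu.le)
        _ = LK3 * f s := mul_one _
    have hdiffIio : |(∫ z in Set.Iio x, D (c y s - c z s) ∂μ) -
        ∫ z in Set.Iio x, D (c x s - c z s) ∂μ| ≤ LK3 * f s := by
      refine houter _ hIio ?_ (hDint y _ hIio hyIio) (hDint x _ hIio hxIio)
      intro z hz
      have h1 : 0 < c y s - c z s := sub_pos.2 (hsm (lt_trans hz hxy))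
      have h2 : 0 < c x s - c z s := sub_pos.2 (hsm hz)
      have := hLK3p _ _ h1 h2
      have e2 : c y s - c z s - (c x s - c z s) = f s := by simp only [hf]; ring
      rw [e2, abs_of_pos hu] at this
      exact this
    have hdiffIoi : |(∫ z in Set.Ioi y, D (c y s - c z s) ∂μ) -
        ∫ z in Set.Ioi y, D (c x s - c z s) ∂μ| ≤ LK3 * f s := by
      refine houter _ hIoi ?_ (hDint y _ hIoi hyIoi) (hDint x _ hIoi hxIoi)
      intro z hz
      have h1 : c y s - c z s < 0 := sub_neg.2 (hsm hz)
      have h2 : c x s - c z s < 0 := sub_neg.2 (hsm (lt_trans hxy hz))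
      have := hLK3m _ _ h1 h2
      have e2 : c y s - c z s - (c x s - c z s) = f s := by simp only [hf]; ring
      rw [e2, abs_of_pos hu] at this
      exact this
    have hmid1 : |∫ z in Set.Ico x y, D (c y s - c z s) ∂μ| ≤ MK3 * (μ (Set.Ico x y)).toReal :=
      hDbd y _ hIco hyIco
    have hmid2 : |∫ z in Set.Ioc x y, D (c x s - c z s) ∂μ| ≤ MK3 * (μ (Set.Ioc x y)).toReal :=
      hDbd x _ hIoc hxIoc
    -- |I y - I x| bound
    have hIdiff : |I y - I x| ≤ 2 * LK3 * f s +
        MK3 * ((μ (Set.Ico x y)).toReal + (μ (Set.Ioc x y)).toReal) := by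
      rw [splitY, splitX]
      have e : ∀ a1 a2 a3 b1 b2 b3 : ℝ,
          (a1 + a2 + a3) - (b1 + b2 + b3) = ((a1 - b1) + (a3 - b3)) + a2 + (-b2) := by
        intro _ _ _ _ _ _; ring
      rw [e]
      calc _ ≤ |((∫ z in Set.Iio x, D (c y s - c z s) ∂μ) - ∫ z in Set.Iio x, D (c x s - c z s) ∂μ)
                + ((∫ z in Set.Ioi y, D (c y s - c z s) ∂μ) - ∫ z in Set.Ioi y, D (c x s - c z s) ∂μ)|
              + |∫ z in Set.Ico x y, D (c y s - c z s) ∂μ|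
              + |-∫ z in Set.Ioc x y, D (c x s - c z s) ∂μ| := by
            exact le_trans (abs_add_le _ _) (add_le_add_left (abs_add_le _ _) _)
        _ ≤ (LK3 * f s + LK3 * f s) + MK3 * (μ (Set.Ico x y)).toReal
              + MK3 * (μ (Set.Ioc x y)).toReal := by
            rw [abs_neg]
            exact add_le_add (add_le_add (le_trans (abs_add_le _ _)
              (add_le_add hdiffIio hdiffIoi)) hmid1) hmid2
        _ = 2 * LK3 * f s + MK3 * ((μ (Set.Ico x y)).toReal + (μ (Set.Ioc x y)).toReal) := by ring
    -- assemble
    have hfe : f' s = (H y - H x) * (H y + H x) * I y + H x ^ 2 * (I y - I x) := by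
      simp only [hf', hH, hI]; ring
    rw [Real.norm_eq_abs, hfe, hfs]
    have hHsum : |H y + H x| ≤ 2 * MK :=
      le_trans (abs_add_le _ _) (by linarith [hHbd x, hHbd y])
    have step : |(H y - H x) * (H y + H x) * I y + H x ^ 2 * (I y - I x)|
        ≤ |H y - H x| * |H y + H x| * |I y| + |H x| ^ 2 * |I y - I x| := by
      calc _ ≤ |(H y - H x) * (H y + H x) * I y| + |H x ^ 2 * (I y - I x)| := abs_add_le _ _
        _ = |H y - H x| * |H y + H x| * |I y| + |H x| ^ 2 * |I y - I x| := by
            rw [abs_mul, abs_mul, abs_mul, abs_pow]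
    refine le_trans step ?_
    have t1 : |H y - H x| * |H y + H x| * |I y| ≤ (LK * f s) * (2 * MK) * MK3 := by
      refine mul_le_mul (mul_le_mul hHdiff hHsum (abs_nonneg _)
        (mul_nonneg hLK0 hu.le)) (hIbd y) (abs_nonneg _) ?_
      exact mul_nonneg (mul_nonneg hLK0 hu.le) (by linarith)
    have t2 : |H x| ^ 2 * |I y - I x| ≤ MK ^ 2 * (2 * LK3 * f s +
        MK3 * ((μ (Set.Ico x y)).toReal + (μ (Set.Ioc x y)).toReal)) := by
      refine mul_le_mul (pow_le_pow_left₀ (abs_nonneg _) (hHbd x) 2) hIdiff (abs_nonneg _)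
        (by positivity)
    have hεnn : 0 ≤ (μ (Set.Ico x y)).toReal + (μ (Set.Ioc x y)).toReal := by positivity
    nlinarith [mul_nonneg (mul_nonneg hMK0 hLK0) (mul_nonneg hMK30 hu.le)]
  -- apply Grönwall
  have hcont : ContinuousOn f (Set.Icc 0 t) := fun s hs =>
    ((hderiv s hs.1).continuousAt).continuousWithinAt
  have hderiv' : ∀ s ∈ Set.Ico (0:ℝ) t, HasDerivWithinAt f (f' s) (Set.Ici s) s :=
    fun s hs => (hderiv s hs.1).hasDerivWithinAt
  have ha : ‖f 0‖ ≤ y - x := by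
    simp only [hf, hinit]
    rw [Real.norm_eq_abs, abs_of_pos (sub_pos.2 hxy)]
  have key := norm_le_gronwallBound_of_norm_deriv_right_le hcont hderiv' ha hbound t
    ⟨ht, le_refl t⟩
  rw [gronwallBound_of_K_ne_0 (ne_of_gt hApos)] at key
  simp only [sub_zero] at key
  calc c y t - c x t ≤ ‖f t‖ := le_abs_self _
    _ ≤ _ := by
        refine le_trans key (le_of_eq ?_)
        rw [hε]
end

section
/- Approximation lemma: let μ ∈ M⁺(ℝ), F ⊂ ℝ dense and containing all atoms of μ, (Mₙ) an increasing sequence of finite subsets of F with ∪Mₙ = F, and μₙ = Σ_{x∈Mₙ} ωₙ(x)δₓ where ωₙ(x) = μ[x,x') (x' the successor of x in Mₙ) and ωₙ(max Mₙ) = μ[max Mₙ, ∞). If U ⊆ ℝ is a finite union of open intervals and f : ℝ → ℝ is bounded with all discontinuities contained in F ∪ (ℝ∖U), then ∫_U f dμₙ → ∫_U f dμ. -/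
open MeasureTheory

/-- The half-open interval attached to a point `x` of a finite set `M`:
`[x, succ x)` if `x` has a successor in `M`, and `[x, ∞)` otherwise. -/
noncomputable def stmt17I (M : Finset ℝ) (x : ℝ) : Set ℝ :=
  if ((M.filter (fun y => x < y)).Nonempty)
    then Set.Ico x (sInf {y : ℝ | y ∈ M ∧ x < y})
    else Set.Ici x

lemma stmt17I_measurable (M : Finset ℝ) (x : ℝ) : MeasurableSet (stmt17I M x) := by
  unfold stmt17I
  split
  · exact measurableSet_Ico
  · exact measurableSet_Ici

lemma stmt17I_subset (M : Finset ℝ) (x : ℝ) : stmt17I M x ⊆ Set.Ici x := by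
  unfold stmt17I
  split
  · exact Set.Ico_subset_Ici_self
  · exact subset_rfl

lemma stmt17_mem_I_iff (M : Finset ℝ) (t : ℝ)
    (hne : (M.filter (fun y => y ≤ t)).Nonempty) (x : ℝ) (hx : x ∈ M) :
    t ∈ stmt17I M x ↔ x = (M.filter (fun y => y ≤ t)).max' hne := by
  have hsmem := Finset.max'_mem _ hne
  rw [Finset.mem_filter] at hsmem
  obtain ⟨hsM, hst⟩ := hsmem
  constructor
  · intro ht
    by_contra hxs
    have hxt : x ≤ t := stmt17I_subset M x ht
    have hxm : x ∈ M.filter (fun y => y ≤ t) := Finset.mem_filter.2 ⟨hx, hxt⟩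
    have hxle : x ≤ (M.filter (fun y => y ≤ t)).max' hne := Finset.le_max' _ x hxm
    have hxlt : x < (M.filter (fun y => y ≤ t)).max' hne := lt_of_le_of_ne hxle hxs
    have hne2 : ((M.filter (fun y => x < y)).Nonempty) :=
      ⟨_, Finset.mem_filter.2 ⟨hsM, hxlt⟩⟩
    have hIx : stmt17I M x = Set.Ico x (sInf {y : ℝ | y ∈ M ∧ x < y}) := if_pos hne2
    rw [hIx] at ht
    have hbdd : BddBelow {y : ℝ | y ∈ M ∧ x < y} :=
      ((M : Set ℝ).toFinite.subset (fun y hy => hy.1)).bddBelow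
    have hle : sInf {y : ℝ | y ∈ M ∧ x < y} ≤ (M.filter (fun y => y ≤ t)).max' hne :=
      csInf_le hbdd ⟨hsM, hxlt⟩
    exact absurd ht.2 (not_lt.2 (hle.trans hst))
  · intro hxeq
    have hxt : x ≤ t := hxeq ▸ hst
    by_cases hne2 : ((M.filter (fun y => x < y)).Nonempty)
    · have hIx : stmt17I M x = Set.Ico x (sInf {y : ℝ | y ∈ M ∧ x < y}) := if_pos hne2
      rw [hIx]
      refine ⟨hxt, ?_⟩
      set A : Set ℝ := {y : ℝ | y ∈ M ∧ x < y} with hA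
      have hAfin : A.Finite := (M : Set ℝ).toFinite.subset (fun y hy => hy.1)
      have hAne : A.Nonempty := by
        obtain ⟨y, hy⟩ := hne2
        rw [Finset.mem_filter] at hy
        exact ⟨y, hy.1, hy.2⟩
      have hmem : sInf A ∈ A := hAne.csInf_mem hAfin
      by_contra hlt
      push_neg at hlt
      have hmem2 : sInf A ∈ M.filter (fun y => y ≤ t) := Finset.mem_filter.2 ⟨hmem.1, hlt⟩
      have : sInf A ≤ (M.filter (fun y => y ≤ t)).max' hne := Finset.le_max' _ _ hmem2
      rw [← hxeq] at this
      exact absurd hmem.2 (not_lt.2 this)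
    · rw [stmt17I, if_neg hne2]
      exact hxt

/-- The step function approximating `g` from a finite set `M`. -/
noncomputable def stmt17h (g : ℝ → ℝ) (M : Finset ℝ) (t : ℝ) : ℝ :=
  ∑ x ∈ M, (stmt17I M x).indicator (fun _ => g x) t

lemma stmt17h_eq_of_nonempty (g : ℝ → ℝ) (M : Finset ℝ) (t : ℝ)
    (hne : (M.filter (fun y => y ≤ t)).Nonempty) :
    stmt17h g M t = g ((M.filter (fun y => y ≤ t)).max' hne) := by
  have hsM : (M.filter (fun y => y ≤ t)).max' hne ∈ M :=
    (Finset.mem_filter.1 (Finset.max'_mem _ hne)).1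
  unfold stmt17h
  rw [Finset.sum_eq_single ((M.filter (fun y => y ≤ t)).max' hne)]
  · rw [Set.indicator_of_mem ((stmt17_mem_I_iff M t hne _ hsM).2 rfl)]
  · intro x hx hxne
    exact Set.indicator_of_notMem (fun ht => hxne ((stmt17_mem_I_iff M t hne x hx).1 ht)) _
  · intro h
    exact absurd hsM h

lemma stmt17h_eq_zero (g : ℝ → ℝ) (M : Finset ℝ) (t : ℝ)
    (hne : ¬ (M.filter (fun y => y ≤ t)).Nonempty) :
    stmt17h g M t = 0 := by
  unfold stmt17h
  refine Finset.sum_eq_zero fun x hx => ?_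
  refine Set.indicator_of_notMem (fun ht => hne ?_) _
  exact ⟨x, Finset.mem_filter.2 ⟨hx, stmt17I_subset M x ht⟩⟩

lemma stmt17h_measurable (g : ℝ → ℝ) (M : Finset ℝ) : Measurable (stmt17h g M) :=
  Finset.measurable_sum _ fun x _ => measurable_const.indicator (stmt17I_measurable M x)

lemma stmt17h_integral (μ : Measure ℝ) [IsFiniteMeasure μ] (g : ℝ → ℝ) (M : Finset ℝ) :
    ∫ t, stmt17h g M t ∂μ = ∑ x ∈ M, (μ (stmt17I M x)).toReal * g x := by
  unfold stmt17h
  rw [integral_finset_sum _ (fun x _ => (integrable_const (g x)).indicator (stmt17I_measurable M x))]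
  refine Finset.sum_congr rfl fun x _ => ?_
  rw [integral_indicator_const (g x) (stmt17I_measurable M x), smul_eq_mul, measureReal_def]

/-- Approximation lemma: with `μₙ = Σ_{x∈Mₙ} ωₙ(x) δₓ`, where `ωₙ(x) = μ[x,x')` (`x'` the
successor of `x` in `Mₙ`) and `ωₙ(max Mₙ) = μ[max Mₙ,∞)`, one has
`∫_U f dμₙ → ∫_U f dμ` for any finite union `U` of open intervals and any bounded `f`
whose discontinuities lie in `F ∪ (ℝ∖U)`. -/
theorem stmt17 (μ : Measure ℝ) [IsFiniteMeasure μ]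
    (F : Set ℝ) (hFdense : Dense F) (hFcount : F.Countable)
    (hatoms : ∀ x : ℝ, 0 < μ {x} → x ∈ F)
    (M : ℕ → Finset ℝ) (hMmono : Monotone M)
    (hMF : ∀ n, (M n : Set ℝ) ⊆ F) (hMunion : (⋃ n, (M n : Set ℝ)) = F)
    (ω : ℕ → ℝ → ENNReal)
    (hω : ∀ n, ∀ x ∈ M n,
      ω n x = if ((M n).filter (fun y => x < y)).Nonempty
        then μ (Set.Ico x (sInf {y : ℝ | y ∈ M n ∧ x < y}))
        else μ (Set.Ici x))
    (μn : ℕ → Measure ℝ)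
    (hμn : ∀ n, μn n = ∑ x ∈ M n, (ω n x) • Measure.dirac x)
    (U : Set ℝ) (S : Finset (ℝ × ℝ)) (hU : U = ⋃ p ∈ S, Set.Ioo p.1 p.2)
    (f : ℝ → ℝ) (B : ℝ) (hBdd : ∀ x : ℝ, |f x| ≤ B)
    (hcont : ∀ x : ℝ, x ∈ U → x ∉ F → ContinuousAt f x) :
    Filter.Tendsto (fun n => ∫ x in U, f x ∂(μn n)) Filter.atTop
      (nhds (∫ x in U, f x ∂μ)) := by
  classical
  have hBnn : 0 ≤ B := le_trans (abs_nonneg _) (hBdd 0)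
  set g : ℝ → ℝ := U.indicator f with hg
  have hUopen : IsOpen U := by
    rw [hU]; exact isOpen_biUnion fun p _ => isOpen_Ioo
  have hUmeas : MeasurableSet U := hUopen.measurableSet
  have hgB : ∀ t, |g t| ≤ B := by
    intro t
    by_cases h : t ∈ U
    · rw [hg, Set.indicator_of_mem h]; exact hBdd t
    · rw [hg, Set.indicator_of_notMem h]; simpa using hBnn
  have hωI : ∀ n, ∀ x ∈ M n, ω n x = μ (stmt17I (M n) x) := by
    intro n x hx
    rw [hω n x hx, stmt17I, apply_ite μ]
  -- Step 1: the integral against μn n equals the integral of the step function against μ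
  have key : ∀ n, ∫ x in U, f x ∂(μn n) = ∫ t, stmt17h g (M n) t ∂μ := by
    intro n
    rw [← integral_indicator hUmeas, ← hg, hμn n,
      integral_finset_sum_measure (fun x hx => ?_), stmt17h_integral μ g (M n)]
    · refine Finset.sum_congr rfl fun x hx => ?_
      rw [integral_smul_measure, integral_dirac, hωI n x hx, smul_eq_mul]
    · have hgd : g =ᵐ[Measure.dirac x] fun _ => g x := by
        rw [MeasureTheory.ae_dirac_eq]
        exact Filter.eventually_pure.2 rfl
      have hint : Integrable g (Measure.dirac x) := (integrable_const (g x)).congr hgd.symm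
      refine hint.smul_measure ?_
      rw [hωI n x hx]
      exact measure_ne_top μ _
  have hμint : ∫ x in U, f x ∂μ = ∫ t, g t ∂μ := (integral_indicator hUmeas).symm
  simp only [key, hμint]
  -- Step 2: dominated convergence
  refine tendsto_integral_of_dominated_convergence (fun _ => B)
    (fun n => (stmt17h_measurable g (M n)).aestronglyMeasurable)
    (integrable_const B) (fun n => ?_) ?_
  · -- bound
    refine Filter.Eventually.of_forall fun t => ?_
    by_cases hne : ((M n).filter (fun y => y ≤ t)).Nonempty
    · rw [stmt17h_eq_of_nonempty g (M n) t hne, Real.norm_eq_abs]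
      exact hgB _
    · rw [stmt17h_eq_zero g (M n) t hne, norm_zero]
      exact hBnn
  · -- a.e. convergence
    set E : Set ℝ := ⋃ p ∈ (S : Set (ℝ × ℝ)), {p.1, p.2} with hE
    have hE0 : μ (E \ F) = 0 := by
      have hsub : E \ F ⊆ ⋃ x ∈ E \ F, {x} := by
        rw [Set.biUnion_of_singleton]
      have hEcount : (E \ F).Countable := by
        refine Set.Countable.mono Set.diff_subset ?_
        exact (S.finite_toSet.biUnion fun p _ => (Set.finite_singleton p.2).insert p.1).countable
      refine measure_mono_null hsub ?_
      rw [measure_biUnion_null_iff hEcount]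
      intro x hx
      by_contra h
      exact hx.2 (hatoms x (pos_iff_ne_zero.2 h))
    have hEc : ∀ᵐ t ∂μ, t ∉ E \ F := measure_eq_zero_iff_ae_notMem.1 hE0
    filter_upwards [hEc] with t ht
    by_cases htF : t ∈ F
    · -- eventually t ∈ M n, so the step function is exactly g t
      have : t ∈ ⋃ n, (M n : Set ℝ) := hMunion.symm ▸ htF
      obtain ⟨N, hN⟩ := Set.mem_iUnion.1 this
      have hev : ∀ᶠ n in Filter.atTop, stmt17h g (M n) t = g t := by
        filter_upwards [Filter.eventually_ge_atTop N] with n hn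
        have htM : t ∈ M n := hMmono hn hN
        have htm : t ∈ (M n).filter (fun y => y ≤ t) := Finset.mem_filter.2 ⟨htM, le_refl t⟩
        have hne : ((M n).filter (fun y => y ≤ t)).Nonempty := ⟨t, htm⟩
        rw [stmt17h_eq_of_nonempty g (M n) t hne]
        congr 1
        refine le_antisymm ?_ ?_
        · exact Finset.max'_le _ _ _ fun y hy => (Finset.mem_filter.1 hy).2
        · exact Finset.le_max' _ t htm
      exact Filter.Tendsto.congr' (Filter.EventuallyEq.symm hev) tendsto_const_nhds
    · -- g is continuous at t, and the best point below t tends to t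
      have htE : t ∉ E := fun h => ht ⟨h, htF⟩
      have hgc : ContinuousAt g t := by
        by_cases htU : t ∈ U
        · refine (hcont t htU htF).congr ?_
          filter_upwards [hUopen.mem_nhds htU] with y hy
          rw [hg, Set.indicator_of_mem hy]
        · set V : Set ℝ := ⋃ p ∈ (S : Set (ℝ × ℝ)), Set.Icc p.1 p.2 with hV
          have hVclosed : IsClosed V := S.finite_toSet.isClosed_biUnion fun p _ => isClosed_Icc
          have htV : t ∉ V := by
            intro hmem
            obtain ⟨p, hpS, hp⟩ := Set.mem_iUnion₂.1 hmem
            have h1 : t ∉ Set.Ioo p.1 p.2 := fun h =>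
              htU (hU ▸ Set.mem_iUnion₂.2 ⟨p, hpS, h⟩)
            have h2 : t = p.1 ∨ t = p.2 := by
              rcases eq_or_lt_of_le hp.1 with h | h
              · exact Or.inl h.symm
              · rcases eq_or_lt_of_le hp.2 with h' | h'
                · exact Or.inr h'
                · exact absurd ⟨h, h'⟩ h1
            exact htE (Set.mem_iUnion₂.2 ⟨p, hpS, by
              rcases h2 with h | h
              · exact Or.inl h
              · exact Or.inr h⟩)
          have hUV : U ⊆ V := by
            rw [hU, hV]
            exact Set.iUnion₂_mono fun p _ => Set.Ioo_subset_Icc_self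
          have h0 : g =ᶠ[nhds t] fun _ => (0 : ℝ) := by
            filter_upwards [hVclosed.isOpen_compl.mem_nhds htV] with y hy
            rw [hg, Set.indicator_of_notMem (fun hyU => hy (hUV hyU))]
          exact (continuousAt_const (y := (0:ℝ))).congr h0.symm
      -- the running maximum below t
      set v : ℕ → ℝ := fun n =>
        if hne : ((M n).filter (fun y => y ≤ t)).Nonempty
          then ((M n).filter (fun y => y ≤ t)).max' hne else t with hv
      have hvt : Filter.Tendsto v Filter.atTop (nhds t) := by
        rw [Metric.tendsto_atTop]
        intro ε hε
        obtain ⟨y, hyF, hy⟩ := hFdense.exists_mem_open isOpen_Ioo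
          (Set.nonempty_Ioo.2 (by linarith : t - ε < t))
        have : y ∈ ⋃ n, (M n : Set ℝ) := hMunion.symm ▸ hyF
        obtain ⟨N, hN⟩ := Set.mem_iUnion.1 this
        refine ⟨N, fun n hn => ?_⟩
        have hyM : y ∈ M n := hMmono hn hN
        have hym : y ∈ (M n).filter (fun z => z ≤ t) := Finset.mem_filter.2 ⟨hyM, hy.2.le⟩
        have hne : ((M n).filter (fun z => z ≤ t)).Nonempty := ⟨y, hym⟩
        have hvn : v n = ((M n).filter (fun z => z ≤ t)).max' hne := dif_pos hne
        have h1 : y ≤ v n := hvn ▸ Finset.le_max' _ y hym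
        have h2 : v n ≤ t := hvn ▸ Finset.max'_le _ _ _ fun z hz => (Finset.mem_filter.1 hz).2
        rw [Real.dist_eq, abs_lt]
        constructor <;> [linarith [hy.1]; linarith]
      have hev : ∀ᶠ n in Filter.atTop, stmt17h g (M n) t = g (v n) := by
        obtain ⟨y, hyF, hy⟩ := hFdense.exists_mem_open isOpen_Ioo
          (Set.nonempty_Ioo.2 (by linarith : t - 1 < t))
        have : y ∈ ⋃ n, (M n : Set ℝ) := hMunion.symm ▸ hyF
        obtain ⟨N, hN⟩ := Set.mem_iUnion.1 this
        filter_upwards [Filter.eventually_ge_atTop N] with n hn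
        have hyM : y ∈ M n := hMmono hn hN
        have hym : y ∈ (M n).filter (fun z => z ≤ t) := Finset.mem_filter.2 ⟨hyM, hy.2.le⟩
        have hne : ((M n).filter (fun z => z ≤ t)).Nonempty := ⟨y, hym⟩
        rw [stmt17h_eq_of_nonempty g (M n) t hne, hv]
        simp only [dif_pos hne]
      exact Filter.Tendsto.congr' (Filter.EventuallyEq.symm hev)
        (hgc.tendsto.comp hvt)
end
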